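/- arXiv:0910.0885 — 5 statements merged into one kernel-verified Lean document; each statement's English description precedes it below -/
import Mathlib

section
/- A topological manifold is metrisable if and only if it is σ-compact. -/
open Set Metric TopologicalSpace

/-- A connected, weakly locally compact metric space is σ-compact. -/
theorem aux_sigmaCompact_of_connected {X : Type*} [MetricSpace X] [ConnectedSpace X]
    [WeaklyLocallyCompactSpace X] : SigmaCompactSpace X := by
  obtain ⟨x₀⟩ : Nonempty X := inferInstance
  -- the "radius of compactness" function
  set S : X → Set ℝ := fun x => {r | r ≤ 1 ∧ IsCompact (closedBall x r)} with hS
  have hSne : ∀ x, ∃ r > 0, r ∈ S x := by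
    intro x
    obtain ⟨K, hK, hKn⟩ := exists_compact_mem_nhds x
    obtain ⟨ε, hε, hball⟩ := Metric.nhds_basis_closedBall.mem_iff.1 hKn
    refine ⟨min ε 1, lt_min hε one_pos, min_le_right _ _, ?_⟩
    exact hK.of_isClosed_subset isClosed_closedBall
      ((closedBall_subset_closedBall (min_le_left _ _)).trans hball)
  have hSbdd : ∀ x, BddAbove (S x) := fun x => ⟨1, fun r hr => hr.1⟩
  set ρ : X → ℝ := fun x => sSup (S x) with hρ
  have hρpos : ∀ x, 0 < ρ x := by
    intro x
    obtain ⟨r, hr, hrS⟩ := hSne x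
    exact lt_of_lt_of_le hr (le_csSup (hSbdd x) hrS)
  have hρcompact : ∀ x r, r < ρ x → IsCompact (closedBall x r) := by
    intro x r hr
    obtain ⟨s, hsS, hrs⟩ := exists_lt_of_lt_csSup ((hSne x).imp fun r h => h.2) hr
    exact hsS.2.of_isClosed_subset isClosed_closedBall (closedBall_subset_closedBall hrs.le)
  have hρlip : ∀ x y, ρ x ≤ ρ y + dist x y := by
    intro x y
    refine csSup_le ((hSne x).imp fun r h => h.2) fun r hr => ?_
    rcases le_or_gt (r - dist x y) 0 with h | h
    · nlinarith [hρpos y, dist_nonneg (x := x) (y := y)]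
    · have : r - dist x y ∈ S y := by
        refine ⟨by linarith [hr.1, dist_nonneg (x := x) (y := y)], ?_⟩
        refine hr.2.of_isClosed_subset isClosed_closedBall fun z hz => ?_
        simp only [mem_closedBall] at hz ⊢
        have := dist_triangle z y x
        rw [dist_comm x y] at *
        linarith
      linarith [le_csSup (hSbdd y) this]
  -- the expansion step
  have step : ∀ A : Set X, IsCompact A → ∃ B : Set X, IsCompact B ∧ A ⊆ interior B ∧
      ∀ y z, z ∈ A → dist y z < ρ y / 8 → y ∈ B := by
    intro A hA
    obtain ⟨F, hFA, hcov⟩ := hA.elim_nhds_subcover (fun x => ball x (ρ x / 8))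
      (fun x _ => ball_mem_nhds x (by linarith [hρpos x]))
    refine ⟨⋃ x ∈ F, closedBall x (ρ x / 2), ?_, ?_, ?_⟩
    · exact F.isCompact_biUnion fun x _ => hρcompact x _ (by linarith [hρpos x])
    · intro a ha
      obtain ⟨x, hxF, hax⟩ := mem_iUnion₂.1 (hcov ha)
      refine mem_interior.2 ⟨ball x (ρ x / 8), ?_, isOpen_ball, hax⟩
      refine subset_iUnion₂_of_subset x hxF fun w hw => ?_
      simp only [mem_ball] at hw
      simp only [mem_closedBall]
      linarith [hρpos x]
    · intro y z hzA hyz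
      obtain ⟨x, hxF, hzx⟩ := mem_iUnion₂.1 (hcov hzA)
      simp only [mem_ball] at hzx
      have hxy : dist y x < ρ y / 8 + ρ x / 8 := by
        have := dist_triangle y z x
        linarith
      have hyx : ρ y ≤ ρ x + dist y x := by simpa [dist_comm] using hρlip y x
      have hρyx : ρ y ≤ 9 / 7 * ρ x := by nlinarith
      refine mem_iUnion₂.2 ⟨x, hxF, ?_⟩
      simp only [mem_closedBall]
      nlinarith [hρpos x]
  choose! B hBc hBi hBp using step
  -- the exhaustion
  let K : ℕ → {s : Set X // IsCompact s} := fun n =>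
    Nat.rec ⟨{x₀}, isCompact_singleton⟩ (fun _ p => ⟨B p.1, hBc p.1 p.2⟩) n
  have hKsucc : ∀ n, (K n).1 ⊆ interior (K (n + 1)).1 := fun n => hBi (K n).1 (K n).2
  set U : Set X := ⋃ n, (K n).1 with hU
  have hUopen : IsOpen U := by
    have : U = ⋃ n, interior (K (n + 1)).1 := by
      apply Subset.antisymm
      · exact iUnion_subset fun n => (hKsucc n).trans (subset_iUnion (fun n => interior (K (n+1)).1) n)
      · exact iUnion_subset fun n => interior_subset.trans (subset_iUnion (fun n => (K n).1) (n + 1))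
    rw [this]
    exact isOpen_iUnion fun n => isOpen_interior
  have hUclosed : IsClosed U := by
    rw [← closure_subset_iff_isClosed]
    intro y hy
    obtain ⟨z, hzU, hyz⟩ := Metric.mem_closure_iff.1 hy (ρ y / 8) (by linarith [hρpos y])
    obtain ⟨m, hzm⟩ := mem_iUnion.1 hzU
    exact mem_iUnion.2 ⟨m + 1, hBp (K m).1 (K m).2 y z hzm hyz⟩
  have hUuniv : U = univ :=
    IsClopen.eq_univ ⟨hUclosed, hUopen⟩ ⟨x₀, mem_iUnion.2 ⟨0, rfl⟩⟩
  exact ⟨⟨fun n => (K n).1, fun n => (K n).2, hUuniv⟩⟩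

/-- A topological manifold of dimension `n`: a connected Hausdorff space in which
every point has an open neighbourhood homeomorphic to `ℝ^n`. -/
def IsTopManifold (M : Type*) [TopologicalSpace M] (n : ℕ) : Prop :=
  ConnectedSpace M ∧ T2Space M ∧
    ∀ x : M, ∃ U : Set M, IsOpen U ∧ x ∈ U ∧ Nonempty (U ≃ₜ (Fin n → ℝ))

theorem manifold_metrizable_iff_sigmaCompact (M : Type*) [TopologicalSpace M] (n : ℕ)
    (hM : IsTopManifold M n) :
    TopologicalSpace.MetrizableSpace M ↔ SigmaCompactSpace M := by
  obtain ⟨hconn, ht2, hcharts⟩ := hM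
  choose U hUopen hxU hU using hcharts
  have hUsc : ∀ x, SecondCountableTopology (U x) := fun x => (hU x).some.secondCountableTopology
  have hUlc : ∀ x, LocallyCompactSpace (U x) := fun x =>
    (hU x).some.locallyCompactSpace_iff.mpr inferInstance
  haveI := hconn; haveI := ht2
  haveI hwlc : WeaklyLocallyCompactSpace M := by
    constructor
    intro x
    haveI := hUlc x
    obtain ⟨K, hK, hKn⟩ := exists_compact_mem_nhds (⟨x, hxU x⟩ : U x)
    exact ⟨Subtype.val '' K, hK.image continuous_subtype_val,
      (hUopen x).isOpenMap_subtype_val.image_mem_nhds hKn⟩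
  constructor
  · intro hmet
    letI := TopologicalSpace.metrizableSpaceMetric M
    exact aux_sigmaCompact_of_connected
  · intro hsc
    obtain ⟨t, htc, -, htcov⟩ := isLindelof_univ.elim_nhds_subcover U
      (fun x _ => (hUopen x).mem_nhds (hxU x))
    haveI := htc.to_subtype
    haveI : ∀ i : t, SecondCountableTopology (U i.1) := fun i => hUsc i.1
    haveI : SecondCountableTopology M := by
      refine secondCountableTopology_of_countable_cover (U := fun i : t => U i.1)
        (fun i => hUopen i.1) ?_
      refine eq_univ_of_univ_subset fun y hy => ?_
      obtain ⟨x, hxt, hyx⟩ := mem_iUnion₂.1 (htcov hy)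
      exact mem_iUnion.2 ⟨⟨x, hxt⟩, hyx⟩
    infer_instance
end

section
/- In a connected, locally separable, locally connected topological space, metaLindelöfness implies Lindelöfness. In particular, every metaLindelöf manifold is Lindelöf. -/
/-- `X` is metaLindelöf: every open cover has a point-countable open refinement. -/
def MetaLindelof (X : Type*) [TopologicalSpace X] : Prop :=
  ∀ 𝒰 : Set (Set X), (∀ U ∈ 𝒰, IsOpen U) → ⋃₀ 𝒰 = Set.univ →
    ∃ 𝒱 : Set (Set X), (∀ V ∈ 𝒱, IsOpen V) ∧ ⋃₀ 𝒱 = Set.univ ∧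
      (∀ V ∈ 𝒱, ∃ U ∈ 𝒰, V ⊆ U) ∧
      ∀ x : X, {V ∈ 𝒱 | x ∈ V}.Countable

/-- In a separable open set, a point-countable open family has only countably many members
meeting it. -/
lemma countable_meets_of_pointCountable {X : Type*} [TopologicalSpace X]
    (𝒱 : Set (Set X)) (hVopen : ∀ V ∈ 𝒱, IsOpen V)
    (hpc : ∀ x : X, {V ∈ 𝒱 | x ∈ V}.Countable)
    (U : Set X) (hU : TopologicalSpace.SeparableSpace U) :
    {W ∈ 𝒱 | (W ∩ U).Nonempty}.Countable := by
  obtain ⟨D, hDc, hDd⟩ := TopologicalSpace.exists_countable_dense U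
  have hsub : {W ∈ 𝒱 | (W ∩ U).Nonempty} ⊆
      ⋃ d ∈ (Subtype.val '' D : Set X), {V ∈ 𝒱 | d ∈ V} := by
    rintro W ⟨hW𝒱, x, hxW, hxU⟩
    have hopen : IsOpen ((Subtype.val : U → X) ⁻¹' W) :=
      (hVopen W hW𝒱).preimage continuous_subtype_val
    have hne : ((Subtype.val : U → X) ⁻¹' W).Nonempty := ⟨⟨x, hxU⟩, hxW⟩
    obtain ⟨d, hdD, hdW⟩ := hDd.exists_mem_open hopen hne
    exact Set.mem_biUnion ⟨d, hdD, rfl⟩ ⟨hW𝒱, hdW⟩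
  exact Set.Countable.mono hsub <| Set.Countable.biUnion (hDc.image _)
    (fun d _ => hpc d)

theorem metaLindelof_implies_lindelof (X : Type*) [TopologicalSpace X]
    [ConnectedSpace X] [LocallyConnectedSpace X]
    (hsep : ∀ x : X, ∃ U : Set X, IsOpen U ∧ x ∈ U ∧ TopologicalSpace.SeparableSpace U)
    (hmL : MetaLindelof X) : LindelofSpace X := by
  classical
  -- the cover by separable open sets
  set 𝒰 : Set (Set X) := {U | IsOpen U ∧ TopologicalSpace.SeparableSpace U} with h𝒰
  have h𝒰open : ∀ U ∈ 𝒰, IsOpen U := fun U hU => hU.1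
  have h𝒰cov : ⋃₀ 𝒰 = Set.univ := by
    apply Set.eq_univ_of_forall
    intro x
    obtain ⟨U, hUo, hxU, hUs⟩ := hsep x
    exact ⟨U, ⟨hUo, hUs⟩, hxU⟩
  obtain ⟨𝒱, hVopen, hVcov, hVref, hVpc⟩ := hmL 𝒰 h𝒰open h𝒰cov
  choose! u hu𝒰 huV using hVref
  -- countably many members of 𝒱 meet any given member of 𝒱
  have key : ∀ V ∈ 𝒱, {W ∈ 𝒱 | (W ∩ V).Nonempty}.Countable := by
    intro V hV
    refine Set.Countable.mono ?_
      (countable_meets_of_pointCountable 𝒱 hVopen hVpc (u V) (hu𝒰 V hV).2)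
    rintro W ⟨hW, x, hxW, hxV⟩
    exact ⟨hW, x, hxW, huV V hV hxV⟩
  -- pick a starting member
  obtain ⟨x₀⟩ : Nonempty X := inferInstance
  obtain ⟨V₀, hV₀, hx₀⟩ : x₀ ∈ ⋃₀ 𝒱 := hVcov ▸ Set.mem_univ x₀
  -- chain construction
  let F : ℕ → Set (Set X) := fun n =>
    Nat.rec ({V₀} : Set (Set X))
      (fun _ Fn => {W ∈ 𝒱 | ∃ V ∈ Fn, (W ∩ V).Nonempty}) n
  have hF0 : F 0 = {V₀} := rfl
  have hFsucc : ∀ n, F (n + 1) = {W ∈ 𝒱 | ∃ V ∈ F n, (W ∩ V).Nonempty} := fun n => rfl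
  have hFsub : ∀ n, F n ⊆ 𝒱 := by
    intro n
    cases n with
    | zero => intro W hW; rw [hF0] at hW; simp only [Set.mem_singleton_iff] at hW; subst hW; exact hV₀
    | succ n => intro W hW; exact hW.1
  have hFcount : ∀ n, (F n).Countable := by
    intro n
    induction n with
    | zero => rw [hF0]; exact Set.countable_singleton _
    | succ n ih =>
      have : F (n + 1) ⊆ ⋃ V ∈ F n, {W ∈ 𝒱 | (W ∩ V).Nonempty} := by
        rintro W ⟨hW, V, hVF, hne⟩
        exact Set.mem_biUnion hVF ⟨hW, hne⟩
      exact Set.Countable.mono this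
        (Set.Countable.biUnion ih (fun V hV => key V (hFsub n hV)))
  set 𝒲 : Set (Set X) := ⋃ n, F n with h𝒲
  have h𝒲count : 𝒲.Countable := Set.countable_iUnion hFcount
  have h𝒲sub : 𝒲 ⊆ 𝒱 := Set.iUnion_subset hFsub
  set S : Set X := ⋃₀ 𝒲 with hS
  -- S is clopen and nonempty, hence univ
  have hSopen : IsOpen S :=
    isOpen_sUnion (fun W hW => hVopen W (h𝒲sub hW))
  have hSne : S.Nonempty := ⟨x₀, V₀, Set.mem_iUnion.2 ⟨0, rfl⟩, hx₀⟩
  have hSclosed : IsClosed S := by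
    rw [← isOpen_compl_iff]
    rw [isOpen_iff_forall_mem_open]
    intro x hx
    obtain ⟨V, hV, hxV⟩ : x ∈ ⋃₀ 𝒱 := hVcov ▸ Set.mem_univ x
    refine ⟨V, ?_, hVopen V hV, hxV⟩
    intro y hyV hyS
    obtain ⟨W, hW𝒲, hyW⟩ := hyS
    obtain ⟨n, hWn⟩ := Set.mem_iUnion.1 hW𝒲
    have hVF : V ∈ F (n + 1) := ⟨hV, W, hWn, ⟨y, hyV, hyW⟩⟩
    exact hx ⟨V, Set.mem_iUnion.2 ⟨n + 1, hVF⟩, hxV⟩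
  have hSuniv : S = Set.univ := by
    rcases isClopen_iff.1 ⟨hSclosed, hSopen⟩ with h | h
    · exact absurd h (Set.nonempty_iff_ne_empty.1 hSne)
    · exact h
  -- Lindelöf
  constructor
  apply isLindelof_of_countable_subcover
  intro ι A hAopen hAcov
  have hrange : ⋃₀ Set.range A = Set.univ := by
    rw [Set.sUnion_range]
    exact Set.eq_univ_of_univ_subset hAcov
  obtain ⟨𝒱', hV'open, hV'cov, hV'ref, hV'pc⟩ :=
    hmL (Set.range A) (by rintro _ ⟨i, rfl⟩; exact hAopen i) hrange
  -- only countably many nonempty members of 𝒱'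
  have hcount : {V ∈ 𝒱' | V.Nonempty}.Countable := by
    have hsub : {V ∈ 𝒱' | V.Nonempty} ⊆
        ⋃ W ∈ 𝒲, {V ∈ 𝒱' | (V ∩ u W).Nonempty} := by
      rintro V ⟨hV, x, hxV⟩
      have : x ∈ S := hSuniv ▸ Set.mem_univ x
      obtain ⟨W, hW𝒲, hxW⟩ := this
      exact Set.mem_biUnion hW𝒲 ⟨hV, x, hxV, huV W (h𝒲sub hW𝒲) hxW⟩
    refine Set.Countable.mono hsub (Set.Countable.biUnion h𝒲count ?_)
    intro W hW
    exact countable_meets_of_pointCountable 𝒱' hV'open hV'pc (u W)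
      (hu𝒰 W (h𝒲sub hW)).2
  -- choose indices
  have : ∀ V ∈ 𝒱', ∃ i : ι, V ⊆ A i := by
    intro V hV
    obtain ⟨U, ⟨i, rfl⟩, hVU⟩ := hV'ref V hV
    exact ⟨i, hVU⟩
  have hι : Nonempty ι := by
    obtain ⟨i, -⟩ := Set.mem_iUnion.1 (hAcov (Set.mem_univ x₀))
    exact ⟨i⟩
  choose! f hf using this
  refine ⟨f '' {V ∈ 𝒱' | V.Nonempty}, hcount.image f, ?_⟩
  intro x _
  obtain ⟨V, hV, hxV⟩ : x ∈ ⋃₀ 𝒱' := hV'cov ▸ Set.mem_univ x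
  exact Set.mem_biUnion (Set.mem_image_of_mem f ⟨hV, x, hxV⟩) (hf V hV hxV)
end

section
/- Every T1 paracompact space has property pp. -/
/-- `X` has property pp: every open cover has an open refinement `𝒱` such that the image of
every choice function on `𝒱` is closed and discrete in `X`. -/
def PropertyPP (X : Type*) [TopologicalSpace X] : Prop :=
  ∀ 𝒰 : Set (Set X), (∀ U ∈ 𝒰, IsOpen U) → ⋃₀ 𝒰 = Set.univ →
    ∃ 𝒱 : Set (Set X), (∀ V ∈ 𝒱, IsOpen V) ∧ ⋃₀ 𝒱 = Set.univ ∧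
      (∀ V ∈ 𝒱, ∃ U ∈ 𝒰, V ⊆ U) ∧
      ∀ f : Set X → X, (∀ V ∈ 𝒱, f V ∈ V) →
        IsClosed (f '' 𝒱) ∧ DiscreteTopology (f '' 𝒱)

/-- A set that is locally finite (every point has a neighborhood meeting it in a finite set)
in a T1 space is closed and discrete. -/
lemma aux_locallyFinite_closed_discrete {X : Type*} [TopologicalSpace X] [T1Space X]
    {S : Set X} (h : ∀ x : X, ∃ W ∈ nhds x, (S ∩ W).Finite) :
    IsClosed S ∧ DiscreteTopology S := by
  rw [← isDiscrete_iff_discreteTopology, isClosed_and_discrete_iff]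
  intro x
  rw [Filter.disjoint_principal_right]
  obtain ⟨W, hW, hfin⟩ := h x
  have hF : IsClosed ((S ∩ W) \ {x}) := (hfin.subset Set.diff_subset).isClosed
  have hWx : W \ ((S ∩ W) \ {x}) ∈ nhds x := by
    rw [Set.diff_eq]
    exact Filter.inter_mem hW (hF.isOpen_compl.mem_nhds (by simp))
  have h1 : W \ ((S ∩ W) \ {x}) ∈ nhdsWithin x {x}ᶜ := nhdsWithin_le_nhds hWx
  have h2 : ({x}ᶜ : Set X) ∈ nhdsWithin x {x}ᶜ := self_mem_nhdsWithin
  filter_upwards [h1, h2] with y hy hyx hyS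
  exact hy.2 ⟨⟨hyS, hy.1⟩, hyx⟩

theorem paracompact_t1_propertyPP (X : Type*) [TopologicalSpace X]
    [T1Space X] [ParacompactSpace X] : PropertyPP X := by
  intro 𝒰 h𝒰open h𝒰cover
  obtain ⟨β, v, hvo, hvcov, hvlf, hvref⟩ :=
    ParacompactSpace.locallyFinite_refinement (↥𝒰) (fun U => (U : Set X))
      (fun U => h𝒰open U U.2) (by rwa [← Set.sUnion_eq_iUnion])
  refine ⟨Set.range v, ?_, ?_, ?_, ?_⟩
  · rintro V ⟨b, rfl⟩; exact hvo b
  · rw [Set.sUnion_range]; exact hvcov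
  · rintro V ⟨b, rfl⟩
    obtain ⟨a, ha⟩ := hvref b
    exact ⟨a, a.2, ha⟩
  · intro f hf
    apply aux_locallyFinite_closed_discrete
    intro x
    obtain ⟨W, hW, hfin⟩ := hvlf x
    refine ⟨W, hW, ((hfin.image (fun b => f (v b))).subset ?_)⟩
    rintro y ⟨⟨V, ⟨b, rfl⟩, rfl⟩, hyW⟩
    exact ⟨b, ⟨f (v b), hf _ ⟨b, rfl⟩, hyW⟩, rfl⟩
end

section
/- The open long ray L⁺, defined as the set ω₁ × [0,1) minus the point (0,0) with the order topology from the lexicographic order, is a connected, locally Euclidean (dimension 1), Hausdorff space that is not metrisable. -/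
/-- The set of countable ordinals, i.e. ordinals less than `ω₁`. -/
def Omega1 : Type _ := {o : Ordinal // o < (Cardinal.aleph 1).ord}

noncomputable instance : LinearOrder Omega1 := Subtype.instLinearOrder _

/-- The point `(0, 0)` of `ω₁ ×ₗ [0,1)`. -/
def longRayZero : Omega1 ×ₗ (Set.Ico (0:ℝ) 1) :=
  toLex (⟨0, by
    rw [Cardinal.lt_ord]
    simpa using (Cardinal.aleph_pos 1)⟩,
    ⟨0, by constructor <;> norm_num⟩)

/-- The open long ray: `ω₁ × [0,1)` with the lexicographic order, minus `(0,0)`. -/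
def LongRay : Type _ := {p : Omega1 ×ₗ (Set.Ico (0:ℝ) 1) // p ≠ longRayZero}

noncomputable instance : LinearOrder LongRay := Subtype.instLinearOrder _

noncomputable instance : TopologicalSpace LongRay := Preorder.topology LongRay

instance : OrderTopology LongRay := ⟨rfl⟩

namespace LongRay

lemma omega1_pos : (0 : Ordinal) < (Cardinal.aleph 1).ord := by
  rw [Cardinal.lt_ord]; simpa using (Cardinal.aleph_pos 1)

lemma omega1_isLimit : Order.IsSuccLimit (Cardinal.aleph 1).ord :=
  Cardinal.isSuccLimit_ord (by simpa using Cardinal.aleph0_le_aleph 1)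

lemma succ_lt_omega1 {a : Ordinal} (ha : a < (Cardinal.aleph 1).ord) :
    a + 1 < (Cardinal.aleph 1).ord := by
  rw [Ordinal.add_one_eq_succ]
  exact omega1_isLimit.succ_lt ha

noncomputable def fst (p : LongRay) : Ordinal :=
  ((ofLex p.val).1 : {o : Ordinal // o < (Cardinal.aleph 1).ord}).val

noncomputable def snd (p : LongRay) : ℝ := ((ofLex p.val).2).val

lemma fst_lt (p : LongRay) : fst p < (Cardinal.aleph 1).ord :=
  ((ofLex p.val).1 : {o : Ordinal // o < (Cardinal.aleph 1).ord}).prop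

lemma snd_nonneg (p : LongRay) : 0 ≤ snd p := ((ofLex p.val).2).prop.1

lemma snd_lt_one (p : LongRay) : snd p < 1 := ((ofLex p.val).2).prop.2

lemma ne_zero (p : LongRay) : ¬(fst p = 0 ∧ snd p = 0) := by
  rintro ⟨h1, h2⟩
  apply p.prop
  show p.val = longRayZero
  have : ofLex p.val = ofLex longRayZero := by
    apply Prod.ext
    · exact Subtype.ext h1
    · exact Subtype.ext h2
  exact congrArg toLex this

noncomputable def mk (a : Ordinal) (ha : a < (Cardinal.aleph 1).ord) (t : ℝ)
    (ht0 : 0 ≤ t) (ht1 : t < 1) (hne : ¬(a = 0 ∧ t = 0)) : LongRay :=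
  ⟨toLex ((⟨a, ha⟩ : {o : Ordinal // o < (Cardinal.aleph 1).ord}), ⟨t, ht0, ht1⟩), by
    intro h
    apply hne
    have h1 := congrArg (fun x : Omega1 ×ₗ (Set.Ico (0:ℝ) 1) =>
      ((ofLex x).1 : {o : Ordinal // o < (Cardinal.aleph 1).ord}).val) h
    have h2 := congrArg (fun x : Omega1 ×ₗ (Set.Ico (0:ℝ) 1) => ((ofLex x).2).val) h
    exact ⟨h1, h2⟩⟩

@[simp] lemma fst_mk (a ha t ht0 ht1 hne) : fst (mk a ha t ht0 ht1 hne) = a := rfl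
@[simp] lemma snd_mk (a ha t ht0 ht1 hne) : snd (mk a ha t ht0 ht1 hne) = t := rfl

lemma eq_iff {p q : LongRay} : p = q ↔ fst p = fst q ∧ snd p = snd q := by
  constructor
  · rintro rfl; exact ⟨rfl, rfl⟩
  · rintro ⟨h1, h2⟩
    apply Subtype.ext
    show p.val = q.val
    have : ofLex p.val = ofLex q.val := Prod.ext (Subtype.ext h1) (Subtype.ext h2)
    exact congrArg toLex this

lemma lt_iff {p q : LongRay} :
    p < q ↔ fst p < fst q ∨ (fst p = fst q ∧ snd p < snd q) := by
  change p.val < q.val ↔ _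
  rw [show p.val = toLex (ofLex p.val) from rfl, show q.val = toLex (ofLex q.val) from rfl,
    Prod.Lex.lt_iff]
  constructor
  · rintro (h | ⟨h, h2⟩)
    · exact Or.inl h
    · exact Or.inr ⟨congrArg Subtype.val h, h2⟩
  · rintro (h | ⟨h, h2⟩)
    · exact Or.inl h
    · exact Or.inr ⟨Subtype.ext h, h2⟩

lemma le_iff {p q : LongRay} :
    p ≤ q ↔ fst p < fst q ∨ (fst p = fst q ∧ snd p ≤ snd q) := by
  change p.val ≤ q.val ↔ _
  rw [show p.val = toLex (ofLex p.val) from rfl, show q.val = toLex (ofLex q.val) from rfl,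
    Prod.Lex.le_iff]
  constructor
  · rintro (h | ⟨h, h2⟩)
    · exact Or.inl h
    · exact Or.inr ⟨congrArg Subtype.val h, h2⟩
  · rintro (h | ⟨h, h2⟩)
    · exact Or.inl h
    · exact Or.inr ⟨Subtype.ext h, h2⟩

lemma fst_mono {p q : LongRay} (h : p ≤ q) : fst p ≤ fst q := by
  rcases le_iff.mp h with h | ⟨h, _⟩
  · exact h.le
  · exact h.le

end LongRay

namespace LongRay

instance : NoMaxOrder LongRay := by
  constructor
  intro p
  refine ⟨mk (fst p) (fst_lt p) ((snd p + 1)/2) (by linarith [snd_nonneg p])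
    (by linarith [snd_lt_one p]) (by rintro ⟨-, h⟩; linarith [snd_nonneg p]), ?_⟩
  rw [lt_iff]
  exact Or.inr ⟨rfl, by simp; linarith [snd_lt_one p]⟩

instance : NoMinOrder LongRay := by
  constructor
  intro p
  by_cases h : snd p = 0
  · have hp : fst p ≠ 0 := fun h0 => ne_zero p ⟨h0, h⟩
    refine ⟨mk 0 omega1_pos (1/2) (by norm_num) (by norm_num) (by norm_num), ?_⟩
    rw [lt_iff]
    exact Or.inl (by simpa using pos_iff_ne_zero.mpr hp)
  · have hp : 0 < snd p := lt_of_le_of_ne (snd_nonneg p) (Ne.symm h)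
    refine ⟨mk (fst p) (fst_lt p) (snd p / 2) (by linarith) (by linarith [snd_lt_one p])
      (by rintro ⟨-, h2⟩; linarith), ?_⟩
    rw [lt_iff]
    exact Or.inr ⟨rfl, by simp; linarith⟩

instance : DenselyOrdered LongRay := by
  constructor
  intro p q hpq
  rcases lt_iff.mp hpq with h | ⟨h, h2⟩
  · refine ⟨mk (fst p) (fst_lt p) ((snd p + 1)/2) (by linarith [snd_nonneg p])
      (by linarith [snd_lt_one p]) (by rintro ⟨-, h2⟩; linarith [snd_nonneg p]), ?_, ?_⟩
    · rw [lt_iff]; exact Or.inr ⟨rfl, by simp; linarith [snd_lt_one p]⟩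
    · rw [lt_iff]; exact Or.inl (by simpa using h)
  · refine ⟨mk (fst p) (fst_lt p) ((snd p + snd q)/2) (by linarith [snd_nonneg p])
      (by linarith [snd_lt_one q]) (by rintro ⟨-, h3⟩; linarith [snd_nonneg p]), ?_, ?_⟩
    · rw [lt_iff]; exact Or.inr ⟨rfl, by simp; linarith⟩
    · rw [lt_iff]; exact Or.inr ⟨by simpa using h, by simp; linarith⟩

theorem exists_isLUB {S : Set LongRay} (hne : S.Nonempty) (hbdd : BddAbove S) :
    ∃ x, IsLUB S x := by
  obtain ⟨ub, hub⟩ := hbdd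
  obtain ⟨p₀, hp₀⟩ := hne
  have hAbdd : BddAbove (fst '' S) := by
    refine ⟨fst ub, ?_⟩
    rintro _ ⟨p, hp, rfl⟩
    exact fst_mono (hub hp)
  have hAne : (fst '' S).Nonempty := ⟨fst p₀, p₀, hp₀, rfl⟩
  set α := sSup (fst '' S) with hαdef
  have hαle : ∀ p ∈ S, fst p ≤ α := fun p hp => le_csSup hAbdd ⟨p, hp, rfl⟩
  have hαlub : ∀ c : LongRay, (∀ p ∈ S, p ≤ c) → α ≤ fst c := fun c hc =>
    csSup_le hAne (by rintro _ ⟨p, hp, rfl⟩; exact fst_mono (hc p hp))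
  have hα : α < (Cardinal.aleph 1).ord :=
    lt_of_le_of_lt (hαlub ub (fun p hp => hub hp)) (fst_lt ub)
  by_cases hatt : ∃ p ∈ S, fst p = α
  · obtain ⟨p₁, hp₁S, hp₁⟩ := hatt
    set T := snd '' {p | p ∈ S ∧ fst p = α} with hTdef
    have hTne : T.Nonempty := ⟨snd p₁, p₁, ⟨hp₁S, hp₁⟩, rfl⟩
    have hTbdd : BddAbove T := ⟨1, by rintro _ ⟨p, hp, rfl⟩; exact (snd_lt_one p).le⟩
    set s := sSup T with hsdef
    have hs0 : 0 ≤ s := le_trans (snd_nonneg p₁) (le_csSup hTbdd ⟨p₁, ⟨hp₁S, hp₁⟩, rfl⟩)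
    have hs1 : s ≤ 1 := csSup_le hTne (by rintro _ ⟨p, hp, rfl⟩; exact (snd_lt_one p).le)
    -- snd of every element with fst = α is ≤ s
    have hsle : ∀ p ∈ S, fst p = α → snd p ≤ s := fun p hp hpa =>
      le_csSup hTbdd ⟨p, ⟨hp, hpa⟩, rfl⟩
    have hsub : ∀ c : LongRay, (∀ p ∈ S, p ≤ c) → fst c = α → s ≤ snd c := by
      intro c hc hcα
      refine csSup_le hTne ?_
      rintro _ ⟨p, ⟨hpS, hpα⟩, rfl⟩
      rcases le_iff.mp (hc p hpS) with h | ⟨-, h⟩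
      · exact absurd h (by rw [hpα, hcα]; exact lt_irrefl α)
      · exact h
    by_cases hs : s < 1
    · refine ⟨mk α hα s hs0 hs ?_, ?_, ?_⟩
      · rintro ⟨h1, h2⟩
        refine ne_zero p₁ ⟨hp₁.trans h1, ?_⟩
        have := hsle p₁ hp₁S hp₁
        have := snd_nonneg p₁
        linarith
      · intro p hp
        rw [le_iff]
        rcases lt_or_eq_of_le (hαle p hp) with h | h
        · exact Or.inl (by simpa using h)
        · exact Or.inr ⟨by simpa using h, by simpa using hsle p hp h⟩
      · intro c hc
        rw [le_iff]
        rcases lt_or_eq_of_le (hαlub c hc) with h | h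
        · exact Or.inl (by simpa using h)
        · exact Or.inr ⟨by simpa using h, by simpa using hsub c hc h.symm⟩
    · have hs1' : s = 1 := le_antisymm hs1 (not_lt.mp hs)
      refine ⟨mk (α + 1) (succ_lt_omega1 hα) 0 le_rfl zero_lt_one ?_, ?_, ?_⟩
      · rintro ⟨h1, -⟩
        exact absurd h1 (by simpa using (Ordinal.succ_ne_zero α))
      · intro p hp
        rw [le_iff]
        refine Or.inl ?_
        simp only [fst_mk]
        calc fst p ≤ α := hαle p hp
        _ < α + 1 := by rw [Ordinal.add_one_eq_succ]; exact Order.lt_succ α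
      · intro c hc
        rw [le_iff]
        have hαc : α ≤ fst c := hαlub c hc
        rcases lt_or_eq_of_le hαc with h | h
        · have : α + 1 ≤ fst c := by rw [Ordinal.add_one_eq_succ]; exact Order.succ_le_of_lt h
          rcases lt_or_eq_of_le this with h' | h'
          · exact Or.inl (by simpa using h')
          · exact Or.inr ⟨by simpa using h', by simpa using snd_nonneg c⟩
        · exfalso
          have := hsub c hc h.symm
          rw [hs1'] at this
          linarith [snd_lt_one c]
  · -- α not attained
    have hα0 : α ≠ 0 := by
      intro h0
      refine hatt ⟨p₀, hp₀, ?_⟩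
      have := hαle p₀ hp₀
      rw [h0] at this ⊢
      exact nonpos_iff_eq_zero.mp this
    refine ⟨mk α hα 0 le_rfl zero_lt_one (by rintro ⟨h1, -⟩; exact hα0 h1), ?_, ?_⟩
    · intro p hp
      rw [le_iff]
      refine Or.inl ?_
      simp only [fst_mk]
      exact lt_of_le_of_ne (hαle p hp) (fun h => hatt ⟨p, hp, h⟩)
    · intro c hc
      rw [le_iff]
      rcases lt_or_eq_of_le (hαlub c hc) with h | h
      · exact Or.inl (by simpa using h)
      · exact Or.inr ⟨by simpa using h, by simpa using snd_nonneg c⟩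

theorem exists_isGLB {S : Set LongRay} (hne : S.Nonempty) (hbdd : BddBelow S) :
    ∃ x, IsGLB S x := by
  obtain ⟨lb, hlb⟩ := hbdd
  obtain ⟨p₀, hp₀⟩ := hne
  -- minimal first coordinate (well-foundedness)
  obtain ⟨a, ⟨p₁, hp₁S, hp₁⟩, hmin⟩ :=
    (Ordinal.lt_wf).has_min (fst '' S) ⟨fst p₀, p₀, hp₀, rfl⟩
  have hale : ∀ p ∈ S, a ≤ fst p := fun p hp =>
    not_lt.mp (hmin (fst p) ⟨p, hp, rfl⟩)
  set T := snd '' {p | p ∈ S ∧ fst p = a} with hTdef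
  have hTne : T.Nonempty := ⟨snd p₁, p₁, ⟨hp₁S, hp₁.symm ▸ rfl⟩, rfl⟩
  have hTbdd : BddBelow T := ⟨0, by rintro _ ⟨p, hp, rfl⟩; exact snd_nonneg p⟩
  set s := sInf T with hsdef
  have hs0 : 0 ≤ s := le_csInf hTne (by rintro _ ⟨p, hp, rfl⟩; exact snd_nonneg p)
  have hs1 : s < 1 := lt_of_le_of_lt (csInf_le hTbdd ⟨p₁, ⟨hp₁S, hp₁.symm ▸ rfl⟩, rfl⟩)
    (snd_lt_one p₁)
  have hslb : ∀ c : LongRay, (∀ p ∈ S, c ≤ p) → fst c = a → snd c ≤ s := by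
    intro c hc hca
    refine le_csInf hTne ?_
    rintro _ ⟨p, ⟨hpS, hpa⟩, rfl⟩
    rcases le_iff.mp (hc p hpS) with h | ⟨-, h⟩
    · exact absurd h (by rw [hpa, hca]; exact lt_irrefl a)
    · exact h
  have ha : a < (Cardinal.aleph 1).ord := hp₁ ▸ fst_lt p₁
  refine ⟨mk a ha s hs0 hs1 ?_, ?_, ?_⟩
  · rintro ⟨h1, h2⟩
    -- then lb = (0,0), impossible
    have hlba : fst lb ≤ a := hp₁ ▸ fst_mono (hlb hp₁S)
    have hlb0 : fst lb = 0 := nonpos_iff_eq_zero.mp (h1 ▸ hlba)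
    refine ne_zero lb ⟨hlb0, ?_⟩
    have h3 : snd lb ≤ s := hslb lb (fun p hp => hlb hp) (hlb0.trans h1.symm)
    have := snd_nonneg lb
    linarith
  · intro p hp
    rw [le_iff]
    rcases lt_or_eq_of_le (hale p hp) with h | h
    · exact Or.inl (by simpa using h)
    · exact Or.inr ⟨by simpa using h, by simpa using csInf_le hTbdd ⟨p, ⟨hp, h.symm⟩, rfl⟩⟩
  · intro c hc
    rw [le_iff]
    have hca : fst c ≤ a := hp₁ ▸ fst_mono (hc hp₁S)
    rcases lt_or_eq_of_le hca with h | h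
    · exact Or.inl (by simpa using h)
    · exact Or.inr ⟨by simpa using h, by simpa using hslb c (fun p hp => hc hp) h⟩

noncomputable def pt : LongRay := mk 0 omega1_pos (1/2) (by norm_num) (by norm_num) (by norm_num)

instance : Nonempty LongRay := ⟨pt⟩

open Classical in
noncomputable instance : ConditionallyCompleteLinearOrder LongRay :=
  { (inferInstance : LinearOrder LongRay), LinearOrder.toLattice with
    sSup := fun S => if h : S.Nonempty ∧ BddAbove S then (exists_isLUB h.1 h.2).choose else pt
    sInf := fun S => if h : S.Nonempty ∧ BddBelow S then (exists_isGLB h.1 h.2).choose else pt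
    isLUB_csSup := by
      intro S hne hbdd
      have h : S.Nonempty ∧ BddAbove S := ⟨hne, hbdd⟩
      simp only [dif_pos h]
      exact (exists_isLUB h.1 h.2).choose_spec
    isGLB_csInf := by
      intro S hne hbdd
      have h : S.Nonempty ∧ BddBelow S := ⟨hne, hbdd⟩
      simp only [dif_pos h]
      exact (exists_isGLB h.1 h.2).choose_spec
    csSup_of_not_bddAbove := by
      intro S hS
      simp only [dif_neg (fun h : S.Nonempty ∧ BddAbove S => hS h.2),
        dif_neg (fun h : (∅ : Set LongRay).Nonempty ∧ BddAbove ∅ => Set.not_nonempty_empty h.1)]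
    csInf_of_not_bddBelow := by
      intro S hS
      simp only [dif_neg (fun h : S.Nonempty ∧ BddBelow S => hS h.2),
        dif_neg (fun h : (∅ : Set LongRay).Nonempty ∧ BddBelow ∅ => Set.not_nonempty_empty h.1)] }

theorem bddAbove_of_countable {S : Set LongRay} (hS : S.Countable) : BddAbove S := by
  rcases S.eq_empty_or_nonempty with rfl | hne
  · exact bddAbove_empty
  obtain ⟨g, rfl⟩ := hS.exists_eq_range hne
  set f : ℕ → Ordinal := fun n => fst (g n) with hf
  have hβ : iSup f < (Cardinal.aleph 1).ord := by
    apply Cardinal.iSup_lt_ord_lift_of_isRegular Cardinal.isRegular_aleph_one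
    · simpa using Cardinal.aleph0_lt_aleph_one
    · intro i; exact fst_lt _
  refine ⟨mk (iSup f + 1) (succ_lt_omega1 hβ) 0 le_rfl zero_lt_one
    (by rintro ⟨h1, -⟩; exact absurd h1 (by simpa using Ordinal.succ_ne_zero (iSup f))), ?_⟩
  rintro p ⟨n, rfl⟩
  rw [le_iff]
  refine Or.inl ?_
  simp only [fst_mk]
  calc fst (g n) ≤ iSup f := le_ciSup (Ordinal.bddAbove_range f) n
  _ < iSup f + 1 := by rw [Ordinal.add_one_eq_succ]; exact Order.lt_succ _

end LongRay

theorem nonempty_orderIso_real {A : Type*} [LinearOrder A] [DenselyOrdered A]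
    [NoMinOrder A] [NoMaxOrder A] [Nonempty A]
    (hlub : ∀ S : Set A, S.Nonempty → BddAbove S → ∃ x, IsLUB S x)
    (D : Set A) (hDc : D.Countable)
    (hdense : ∀ x y : A, x < y → ∃ d ∈ D, x < d ∧ d < y) :
    Nonempty (A ≃o ℝ) := by
  haveI : Countable ↥D := hDc.to_subtype
  obtain ⟨x⟩ := (inferInstance : Nonempty A)
  obtain ⟨y, hy⟩ := exists_gt x
  obtain ⟨d₀, hd₀D, -, -⟩ := hdense x y hy
  haveI : Nonempty ↥D := ⟨⟨d₀, hd₀D⟩⟩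
  haveI : DenselyOrdered ↥D := ⟨fun d1 d2 h => by
    obtain ⟨d, hdD, h1, h2⟩ := hdense d1 d2 h
    exact ⟨⟨d, hdD⟩, h1, h2⟩⟩
  haveI : NoMaxOrder ↥D := ⟨fun d => by
    obtain ⟨z, hz⟩ := exists_gt (d : A)
    obtain ⟨e, heD, h1, -⟩ := hdense d z hz
    exact ⟨⟨e, heD⟩, h1⟩⟩
  haveI : NoMinOrder ↥D := ⟨fun d => by
    obtain ⟨z, hz⟩ := exists_lt (d : A)
    obtain ⟨e, heD, -, h2⟩ := hdense z d hz
    exact ⟨⟨e, heD⟩, h2⟩⟩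
  obtain ⟨f⟩ := Order.iso_of_countable_dense (↥D) ℚ
  set F : ↥D → ℝ := fun d => (f d : ℝ) with hF
  have Fmono : StrictMono F := fun a b h => by
    show ((f a : ℚ) : ℝ) < ((f b : ℚ) : ℝ)
    exact_mod_cast f.strictMono h
  have hne : ∀ x : A, (F '' {d : ↥D | (d : A) < x}).Nonempty := by
    intro x
    obtain ⟨z, hz⟩ := exists_lt x
    obtain ⟨d, hdD, -, h2⟩ := hdense z x hz
    exact ⟨F ⟨d, hdD⟩, ⟨d, hdD⟩, h2, rfl⟩
  have hbdd : ∀ x : A, BddAbove (F '' {d : ↥D | (d : A) < x}) := by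
    intro x
    obtain ⟨z, hz⟩ := exists_gt x
    obtain ⟨d', hd'D, h1, -⟩ := hdense x z hz
    refine ⟨F ⟨d', hd'D⟩, ?_⟩
    rintro - ⟨d, hd, rfl⟩
    exact (Fmono (show d < ⟨d', hd'D⟩ from (hd.trans h1 : (d : A) < d'))).le
  set φ : A → ℝ := fun x => sSup (F '' {d : ↥D | (d : A) < x}) with hφ
  have φmono : StrictMono φ := by
    intro x y hxy
    obtain ⟨d1, hd1D, hxd1, hd1y⟩ := hdense x y hxy
    obtain ⟨d2, hd2D, hd12, hd2y⟩ := hdense d1 y hd1y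
    have h1 : φ x ≤ F ⟨d1, hd1D⟩ := by
      refine csSup_le (hne x) ?_
      rintro - ⟨d, hd, rfl⟩
      exact (Fmono (show d < ⟨d1, hd1D⟩ from (hd.trans hxd1 : (d : A) < d1))).le
    have h2 : F ⟨d2, hd2D⟩ ≤ φ y := le_csSup (hbdd y) ⟨⟨d2, hd2D⟩, hd2y, rfl⟩
    exact h1.trans_lt ((Fmono (show (⟨d1, hd1D⟩ : ↥D) < ⟨d2, hd2D⟩ from hd12)).trans_le h2)
  have φsurj : Function.Surjective φ := by
    intro r
    set S : Set A := (fun d : ↥D => (d : A)) '' {d : ↥D | F d < r} with hS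
    have hSne : S.Nonempty := by
      obtain ⟨q, hq⟩ := exists_rat_lt r
      refine ⟨f.symm q, ⟨f.symm q, ?_, rfl⟩⟩
      show (F (f.symm q)) < r
      simp only [hF, OrderIso.apply_symm_apply]
      exact hq
    have hSbdd : BddAbove S := by
      obtain ⟨q, hq⟩ := exists_rat_gt r
      refine ⟨f.symm q, ?_⟩
      rintro - ⟨d, hd, rfl⟩
      have : F d < F (f.symm q) := by
        simp only [hF, OrderIso.apply_symm_apply]
        exact hd.trans hq
      exact (Fmono.lt_iff_lt.mp this).le
    obtain ⟨z, hz⟩ := hlub S hSne hSbdd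
    refine ⟨z, le_antisymm ?_ ?_⟩
    · refine csSup_le (hne z) ?_
      rintro - ⟨d, hdz, rfl⟩
      have hnub : ¬ ((d : A) ∈ upperBounds S) := fun h => absurd (hz.2 h) (not_le.mpr hdz)
      rw [upperBounds, Set.mem_setOf_eq] at hnub
      push_neg at hnub
      obtain ⟨t, htS, hdt⟩ := hnub
      obtain ⟨d', hd', rfl⟩ := htS
      exact (Fmono (show d < d' from hdt)).le.trans hd'.le
    · by_contra hcon
      push_neg at hcon
      obtain ⟨q, hq1, hq2⟩ := exists_rat_btwn hcon
      obtain ⟨q2, hq21, hq22⟩ := exists_rat_btwn hq2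
      have hq2' : (q : ℚ) < q2 := by exact_mod_cast hq21
      have hmem2 : ((f.symm q2 : ↥D) : A) ∈ S := by
        refine ⟨f.symm q2, ?_, rfl⟩
        show F (f.symm q2) < r
        simp only [hF, OrderIso.apply_symm_apply]
        exact hq22
      have hle : ((f.symm q2 : ↥D) : A) ≤ z := hz.1 hmem2
      have hlt : ((f.symm q : ↥D) : A) < z := by
        refine lt_of_lt_of_le ?_ hle
        exact_mod_cast f.symm.strictMono hq2'
      have : (q : ℝ) ≤ φ z := by
        refine le_csSup (hbdd z) ⟨f.symm q, hlt, ?_⟩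
        simp only [hF, OrderIso.apply_symm_apply]
      exact absurd this (not_le.mpr hq1)
  exact ⟨StrictMono.orderIsoOfSurjective φ φmono φsurj⟩

namespace LongRay

theorem locally_euclidean (x : LongRay) :
    ∃ U : Set LongRay, IsOpen U ∧ x ∈ U ∧ Nonempty (U ≃ₜ ℝ) := by
  have hγ : fst x + 1 < (Cardinal.aleph 1).ord := succ_lt_omega1 (fst_lt x)
  set b := mk (fst x + 1) hγ 0 le_rfl zero_lt_one
    (by rintro ⟨h1, -⟩; exact absurd h1 (by simpa using Ordinal.succ_ne_zero (fst x))) with hbdef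
  have hlt_b : ∀ z : LongRay, z < b ↔ fst z < fst x + 1 := by
    intro z
    rw [lt_iff]
    simp only [hbdef, fst_mk, snd_mk]
    constructor
    · rintro (h | ⟨-, h2⟩)
      · exact h
      · exact absurd h2 (not_lt.mpr (snd_nonneg z))
    · exact Or.inl
  have hxb : x ∈ Set.Iio b := by
    rw [Set.mem_Iio, hlt_b, Ordinal.add_one_eq_succ]
    exact Order.lt_succ _
  haveI : Set.OrdConnected (Set.Iio b) := Set.ordConnected_Iio
  haveI : Nonempty ↥(Set.Iio b) := ⟨⟨x, hxb⟩⟩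
  haveI : DenselyOrdered ↥(Set.Iio b) := ⟨fun p q h => by
    obtain ⟨z, h1, h2⟩ := exists_between (show (p : LongRay) < q from h)
    exact ⟨⟨z, lt_trans h2 q.prop⟩, h1, h2⟩⟩
  haveI : NoMaxOrder ↥(Set.Iio b) := ⟨fun p => by
    obtain ⟨z, h1, h2⟩ := exists_between (show (p : LongRay) < b from p.prop)
    exact ⟨⟨z, h2⟩, h1⟩⟩
  haveI : NoMinOrder ↥(Set.Iio b) := ⟨fun p => by
    obtain ⟨z, hz⟩ := exists_lt (p : LongRay)
    exact ⟨⟨z, lt_trans hz p.prop⟩, hz⟩⟩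
  have hlub : ∀ S : Set ↥(Set.Iio b), S.Nonempty → BddAbove S → ∃ z, IsLUB S z := by
    intro S hSne hSbdd
    obtain ⟨c, hc⟩ := hSbdd
    have h1 : (Subtype.val '' S).Nonempty := hSne.image _
    have hcup : (c : LongRay) ∈ upperBounds (Subtype.val '' S) := by
      rintro - ⟨p, hp, rfl⟩
      exact Subtype.coe_le_coe.mpr (hc hp)
    obtain ⟨z, hz⟩ := exists_isLUB h1 ⟨c.val, hcup⟩
    have hzb : z < b := lt_of_le_of_lt (hz.2 hcup) c.prop
    refine ⟨⟨z, hzb⟩, ?_, ?_⟩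
    · intro p hp
      exact Subtype.coe_le_coe.mp (hz.1 ⟨p, hp, rfl⟩)
    · intro c' hc'
      refine Subtype.coe_le_coe.mp (hz.2 ?_)
      rintro - ⟨p, hp, rfl⟩
      exact Subtype.coe_le_coe.mpr (hc' hp)
  set D : Set ↥(Set.Iio b) := {p | ∃ q : ℚ, snd (p : LongRay) = (q : ℝ)} with hDdef
  have hDc : D.Countable := by
    haveI hcnt : Countable ↥(Set.Iio (fst x + 1)) := by
      rw [← Cardinal.mk_le_aleph0_iff, Ordinal.mk_Iio_ordinal, Cardinal.lift_le_aleph0]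
      have h2 : (fst x + 1).card < Cardinal.aleph 1 := Cardinal.lt_ord.mp hγ
      rwa [← Cardinal.succ_aleph0, Order.lt_succ_iff] at h2
    rw [← Set.countable_coe_iff]
    have hj : Function.Injective (fun p : ↥D =>
        ((⟨fst ((p : ↥(Set.Iio b)) : LongRay),
          (hlt_b _).mp (p : ↥(Set.Iio b)).prop⟩ : ↥(Set.Iio (fst x + 1))),
          p.prop.choose)) := by
      intro p p' h
      have h1 := congrArg (fun y : ↥(Set.Iio (fst x + 1)) × ℚ => (y.1 : Ordinal)) h
      have h2 := congrArg Prod.snd h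
      have hs : snd ((p : ↥(Set.Iio b)) : LongRay) = snd ((p' : ↥(Set.Iio b)) : LongRay) := by
        rw [p.prop.choose_spec, p'.prop.choose_spec]
        exact_mod_cast congrArg (fun q : ℚ => (q : ℝ)) h2
      exact Subtype.ext (Subtype.ext (eq_iff.mpr ⟨h1, hs⟩))
    exact hj.countable
  have hdense : ∀ p q : ↥(Set.Iio b), p < q → ∃ d ∈ D, p < d ∧ d < q := by
    intro p q h
    have hpq : (p : LongRay) < q := h
    rcases lt_iff.mp hpq with hc | ⟨hc, hc2⟩
    · obtain ⟨t, ht1, ht2⟩ := exists_rat_btwn (snd_lt_one (p : LongRay))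
      have ht0 : (0:ℝ) ≤ t := (snd_nonneg _).trans ht1.le
      set d := mk (fst (p : LongRay)) (fst_lt _) t ht0 ht2
        (by rintro ⟨-, h0⟩; rw [h0] at ht1; linarith [snd_nonneg (p : LongRay)]) with hddef
      have hdq : d < (q : LongRay) := lt_iff.mpr (Or.inl (by simpa [hddef] using hc))
      have hdb : d ∈ Set.Iio b := lt_trans hdq q.prop
      refine ⟨⟨d, hdb⟩, ⟨t, by simp [hddef]⟩, ?_, ?_⟩
      · exact show (p : LongRay) < d from lt_iff.mpr (Or.inr ⟨by simp [hddef], by simpa [hddef] using ht1⟩)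
      · exact hdq
    · obtain ⟨t, ht1, ht2⟩ := exists_rat_btwn hc2
      have ht0 : (0:ℝ) ≤ t := (snd_nonneg _).trans ht1.le
      set d := mk (fst (p : LongRay)) (fst_lt _) t ht0 (ht2.trans (snd_lt_one _))
        (by rintro ⟨-, h0⟩; rw [h0] at ht1; linarith [snd_nonneg (p : LongRay)]) with hddef
      have hdq : d < (q : LongRay) := lt_iff.mpr (Or.inr ⟨by simpa [hddef] using hc, by simpa [hddef] using ht2⟩)
      have hdb : d ∈ Set.Iio b := lt_trans hdq q.prop
      refine ⟨⟨d, hdb⟩, ⟨t, by simp [hddef]⟩, ?_, ?_⟩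
      · exact show (p : LongRay) < d from lt_iff.mpr (Or.inr ⟨by simp [hddef], by simpa [hddef] using ht1⟩)
      · exact hdq
  obtain ⟨e⟩ := nonempty_orderIso_real hlub D hDc hdense
  exact ⟨Set.Iio b, isOpen_Iio, hxb, ⟨e.toHomeomorph⟩⟩

set_option synthInstance.maxHeartbeats 1000000 in
theorem not_metrizable : ¬ TopologicalSpace.MetrizableSpace LongRay := by
  intro hm
  letI : MetricSpace LongRay := TopologicalSpace.metrizableSpaceMetric LongRay
  haveI : FirstCountableTopology LongRay := inferInstance
  have hsc : IsSeqCompact (Set.Ici pt) := by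
    intro u hu
    obtain ⟨c, hc⟩ := bddAbove_of_countable (Set.countable_range u)
    have hcmp : IsCompact (Set.Icc pt c) := isCompact_Icc
    obtain ⟨a, ha, φ, hφ, htd⟩ := hcmp.isSeqCompact
      (fun n => ⟨hu n, hc (Set.mem_range_self n)⟩)
    exact ⟨a, ha.1, φ, hφ, htd⟩
  have hcomp : IsCompact (Set.Ici pt) := hsc.isCompact
  obtain ⟨g, hg⟩ := hcomp.exists_isGreatest ⟨pt, Set.self_mem_Ici⟩
  obtain ⟨y, hy⟩ := exists_gt g
  exact absurd (hg.2 (le_trans hg.1 hy.le)) (not_le.mpr hy)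

end LongRay

theorem longRay_properties :
    ConnectedSpace LongRay ∧ T2Space LongRay ∧
      (∀ x : LongRay, ∃ U : Set LongRay, IsOpen U ∧ x ∈ U ∧ Nonempty (U ≃ₜ ℝ)) ∧
      ¬ TopologicalSpace.MetrizableSpace LongRay := by
  refine ⟨?_, inferInstance, LongRay.locally_euclidean, LongRay.not_metrizable⟩
  haveI : PreconnectedSpace LongRay := inferInstance
  exact ⟨inferInstance⟩
end

section
/- A topological manifold M is metrisable if and only if M embeds in some Euclidean space ℝ^N, i.e., there is a topological embedding of M into ℝ^N for some N. -/
open Set Topology Metric EMetric Filter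
open scoped ENNReal

noncomputable section

variable {X : Type*} [TopologicalSpace X]

/-- Ambient version of "small inductive dimension ≤ 0" for a subset `A` of a space. -/
def Rel0 (A : Set X) : Prop :=
  ∀ x ∈ A, ∀ U : Set X, IsOpen U → x ∈ U →
    ∃ V : Set X, IsOpen V ∧ x ∈ V ∧ V ⊆ U ∧ frontier V ∩ A = ∅

theorem Rel0.mono {A A' : Set X} (h : Rel0 A) (hsub : A' ⊆ A) : Rel0 A' := by
  intro x hx U hU hxU
  obtain ⟨V, h1, h2, h3, h4⟩ := h x (hsub hx) U hU hxU
  exact ⟨V, h1, h2, h3, by rw [← subset_empty_iff, ← h4]; exact inter_subset_inter_right _ hsub⟩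

theorem rel0_empty : Rel0 (∅ : Set X) := fun x hx => absurd hx (notMem_empty x)

/-- If the frontier of `V` misses `A`, points of `A` in the closure of an open `V` are in `V`. -/
theorem mem_of_closure_of_frontier {A V : Set X} (hV : IsOpen V)
    (hfr : frontier V ∩ A = ∅) {z : X} (hz : z ∈ A) (hcl : z ∈ closure V) : z ∈ V := by
  rcases (closure_eq_interior_union_frontier V ▸ hcl) with h | h
  · rwa [hV.interior_eq] at h
  · exact absurd (show z ∈ frontier V ∩ A from ⟨h, hz⟩) (by rw [hfr]; exact notMem_empty z)

theorem open_disj_closure {V W : Set X} (hV : IsOpen V) (hdisj : Disjoint V W) :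
    V ∩ closure W = ∅ := by
  rw [← subset_empty_iff]
  calc V ∩ closure W ⊆ closure (V ∩ W) := hV.inter_closure
  _ = ∅ := by rw [hdisj.inter_eq, closure_empty]

end
section Step

variable {X : Type*} [MetricSpace X] [SecondCountableTopology X]

theorem rel0_step {A F V W : Set X} (hFA : F ⊆ A) (hFc : closure F ∩ A ⊆ F)
    (hF0 : Rel0 F) (hVo : IsOpen V) (hWo : IsOpen W) (hVne : V.Nonempty) (hWne : W.Nonempty)
    (hd : Disjoint V W) (hinv : closure V ∩ closure W ∩ A = ∅) :
    ∃ V' W' : Set X, IsOpen V' ∧ IsOpen W' ∧ Disjoint V' W' ∧ V ⊆ V' ∧ W ⊆ W' ∧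
      V'.Nonempty ∧ W'.Nonempty ∧ F ⊆ V' ∪ W' ∧ closure V' ∩ closure W' ∩ A = ∅ := by
  classical
  rcases eq_empty_or_nonempty F with hFe | hFne
  · exact ⟨V, W, hVo, hWo, hd, subset_rfl, subset_rfl, hVne, hWne, by simp [hFe], hinv⟩
  set Pp : Set X := {y | infDist y V < infDist y W / 2} with hPp_def
  set Qp : Set X := {y | infDist y W < infDist y V / 2} with hQp_def
  have hPpo : IsOpen Pp := isOpen_lt (continuous_infDist_pt V) ((continuous_infDist_pt W).div_const 2)
  have hQpo : IsOpen Qp := isOpen_lt (continuous_infDist_pt W) ((continuous_infDist_pt V).div_const 2)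
  have hVP : V ⊆ Pp := by
    intro v hv
    have h1 : infDist v V = 0 := infDist_zero_of_mem hv
    have h2 : v ∉ closure W := by
      intro hc
      have := open_disj_closure hVo hd
      exact absurd (show v ∈ V ∩ closure W from ⟨hv, hc⟩) (by rw [this]; exact notMem_empty v)
    have h3 : infDist v W ≠ 0 := fun h0 => h2 ((mem_closure_iff_infDist_zero hWne).2 h0)
    have h4 : (0:ℝ) ≤ infDist v W := infDist_nonneg
    show infDist v V < infDist v W / 2
    rw [h1]; cases' lt_or_eq_of_le h4 with h h; · linarith
    · exact absurd h.symm h3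
  have hWQ : W ⊆ Qp := by
    intro v hv
    have h1 : infDist v W = 0 := infDist_zero_of_mem hv
    have h2 : v ∉ closure V := by
      intro hc
      have := open_disj_closure hWo hd.symm
      exact absurd (show v ∈ W ∩ closure V from ⟨hv, hc⟩) (by rw [this]; exact notMem_empty v)
    have h3 : infDist v V ≠ 0 := fun h0 => h2 ((mem_closure_iff_infDist_zero hVne).2 h0)
    have h4 : (0:ℝ) ≤ infDist v V := infDist_nonneg
    show infDist v W < infDist v V / 2
    rw [h1]; cases' lt_or_eq_of_le h4 with h h; · linarith
    · exact absurd h.symm h3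
  have hclP : closure Pp ⊆ {y | infDist y V ≤ infDist y W / 2} :=
    closure_lt_subset_le (continuous_infDist_pt V) ((continuous_infDist_pt W).div_const 2)
  have hclQ : closure Qp ⊆ {y | infDist y W ≤ infDist y V / 2} :=
    closure_lt_subset_le (continuous_infDist_pt W) ((continuous_infDist_pt V).div_const 2)
  have hPQVW : closure Pp ∩ closure Qp ⊆ closure V ∩ closure W := by
    rintro y ⟨h1, h2⟩
    have g1 : infDist y V ≤ infDist y W / 2 := hclP h1
    have g2 : infDist y W ≤ infDist y V / 2 := hclQ h2
    have g3 : (0:ℝ) ≤ infDist y V := infDist_nonneg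
    have g4 : (0:ℝ) ≤ infDist y W := infDist_nonneg
    have e1 : infDist y V = 0 := by linarith
    have e2 : infDist y W = 0 := by linarith
    exact ⟨(mem_closure_iff_infDist_zero hVne).2 e1, (mem_closure_iff_infDist_zero hWne).2 e2⟩
  -- choose per-point clopen-ish neighbourhoods
  have hzdat : ∀ z : F, ∃ Vb : Set X × Bool, IsOpen Vb.1 ∧ (z:X) ∈ Vb.1 ∧
      frontier Vb.1 ∩ F = ∅ ∧ (Vb.2 = true → Vb.1 ⊆ (closure Qp)ᶜ) ∧
      (Vb.2 = false → Vb.1 ⊆ (closure Pp)ᶜ) := by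
    intro z
    have hznot : (z:X) ∉ closure Pp ∩ closure Qp := by
      intro hc
      have h1 := hPQVW hc
      have h2 : (z:X) ∈ closure V ∩ closure W ∩ A := ⟨h1, hFA z.2⟩
      rw [hinv] at h2; exact h2
    by_cases hzq : (z:X) ∈ closure Qp
    · have hzp : (z:X) ∉ closure Pp := fun hp => hznot ⟨hp, hzq⟩
      obtain ⟨Vz, h1, h2, h3, h4⟩ :=
        hF0 z z.2 (closure Pp)ᶜ isClosed_closure.isOpen_compl hzp
      exact ⟨(Vz, false), h1, h2, h4, fun h => by simp at h, fun _ => h3⟩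
    · obtain ⟨Vz, h1, h2, h3, h4⟩ :=
        hF0 z z.2 (closure Qp)ᶜ isClosed_closure.isOpen_compl hzq
      exact ⟨(Vz, true), h1, h2, h4, fun _ => h3, fun h => by simp at h⟩
  choose dat hdat1 hdat2 hdat3 hdat4 hdat5 using hzdat
  obtain ⟨T, hTc, hTU⟩ :=
    TopologicalSpace.isOpen_iUnion_countable (fun z : F => (dat z).1) (fun z => hdat1 z)
  have hFcov : F ⊆ ⋃ z : F, (dat z).1 := fun x hx => mem_iUnion.2 ⟨⟨x, hx⟩, hdat2 _⟩
  have hTne : T.Nonempty := by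
    rcases hFne with ⟨x0, hx0⟩
    by_contra h
    rw [not_nonempty_iff_eq_empty] at h
    have h2 := hFcov hx0
    rw [← hTU] at h2
    simp [h] at h2
  obtain ⟨e, he⟩ := hTc.exists_eq_range hTne
  set Vm : ℕ → Set X := fun m => (dat (e m)).1 with hVm_def
  set Lm : ℕ → Bool := fun m => (dat (e m)).2 with hLm_def
  have hVmo : ∀ m, IsOpen (Vm m) := fun m => hdat1 _
  have hVmfr : ∀ m, frontier (Vm m) ∩ F = ∅ := fun m => hdat3 _
  have hVmT : ∀ m, Lm m = true → Vm m ⊆ (closure Qp)ᶜ := fun m h => hdat4 _ h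
  have hVmF : ∀ m, Lm m = false → Vm m ⊆ (closure Pp)ᶜ := fun m h => hdat5 _ h
  have hFVm : F ⊆ ⋃ m, Vm m := by
    intro x hx
    have h2 := hFcov hx
    rw [← hTU] at h2
    obtain ⟨z, hzT, hz⟩ := mem_iUnion₂.1 h2
    rw [he] at hzT
    obtain ⟨m, rfl⟩ := hzT
    exact mem_iUnion.2 ⟨m, hz⟩
  set cls : Bool → ℕ → Set X :=
    fun b m => ⋃ l ∈ Finset.range m, if Lm l = b then (∅ : Set X) else closure (Vm l) with hcls_def
  have hclsmem : ∀ b m z, z ∈ cls b m ↔ ∃ l, l < m ∧ Lm l ≠ b ∧ z ∈ closure (Vm l) := by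
    intro b m z
    constructor
    · intro hz
      obtain ⟨l, hl, hzl⟩ := mem_iUnion₂.1 hz
      rw [Finset.mem_range] at hl
      by_cases h : Lm l = b
      · rw [if_pos h] at hzl; exact absurd hzl (notMem_empty z)
      · rw [if_neg h] at hzl; exact ⟨l, hl, h, hzl⟩
    · rintro ⟨l, hl, hne, hz⟩
      exact mem_iUnion₂.2 ⟨l, Finset.mem_range.2 hl, by rw [if_neg hne]; exact hz⟩
  have hclsc : ∀ b m, IsClosed (cls b m) := by
    intro b m
    apply Set.Finite.isClosed_biUnion (Finset.range m).finite_toSet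
    intro l _
    split_ifs
    exacts [isClosed_empty, isClosed_closure]
  set pc : ℕ → Set X := fun m => Vm m \ cls (Lm m) m with hpc_def
  set SSb : Bool → Set X := fun b => ⋃ m, ⋃ (_ : Lm m = b), pc m with hSSb_def
  have hSSb_mem : ∀ b z, z ∈ SSb b ↔ ∃ m, Lm m = b ∧ z ∈ pc m := by
    intro b z
    simp only [hSSb_def, mem_iUnion]
    tauto
  have hFSS : F ⊆ SSb true ∪ SSb false := by
    intro z hz
    have hex : ∃ m, z ∈ Vm m := mem_iUnion.1 (hFVm hz)
    have hzm : z ∈ Vm (Nat.find hex) := Nat.find_spec hex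
    have hzl : ∀ l < Nat.find hex, z ∉ closure (Vm l) := by
      intro l hl hcl
      exact Nat.find_min hex hl (mem_of_closure_of_frontier (hVmo l) (hVmfr l) hz hcl)
    have hzpc : z ∈ pc (Nat.find hex) := by
      refine ⟨hzm, fun hc => ?_⟩
      obtain ⟨l, hl, _, hcl⟩ := (hclsmem _ _ _).1 hc
      exact hzl l hl hcl
    cases hb : Lm (Nat.find hex)
    · exact Or.inr ((hSSb_mem false z).2 ⟨_, hb, hzpc⟩)
    · exact Or.inl ((hSSb_mem true z).2 ⟨_, hb, hzpc⟩)
  have hSSsub : ∀ b, SSb b ⊆ (closure (if b then Qp else Pp))ᶜ := by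
    intro b z hz
    obtain ⟨m, hb, hzpc⟩ := (hSSb_mem b z).1 hz
    cases b
    · exact hVmF m hb hzpc.1
    · exact hVmT m hb hzpc.1
  -- the key combinatorial disjointness
  have hkey : ∀ b m, Lm m = b → ∀ z, z ∈ pc m → z ∉ closure (F ∩ SSb (!b)) := by
    intro b m hb z hzpc hcl
    have h1 : z ∈ closure (Vm m ∩ (F ∩ SSb (!b))) :=
      (hVmo m).inter_closure ⟨hzpc.1, hcl⟩
    have h2 : Vm m ∩ (F ∩ SSb (!b)) ⊆ cls b m := by
      rintro y ⟨hym, _, hySS⟩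
      obtain ⟨m', hbm', hypc⟩ := (hSSb_mem _ _).1 hySS
      have hmm' : m' < m := by
        rcases lt_trichotomy m' m with h | h | h
        · exact h
        · exfalso; rw [h, hb] at hbm'; cases b <;> simp at hbm'
        · exfalso
          apply hypc.2
          refine (hclsmem _ _ _).2 ⟨m, h, ?_, subset_closure hym⟩
          rw [hb, hbm']; cases b <;> simp
      refine (hclsmem _ _ _).2 ⟨m', hmm', ?_, subset_closure hypc.1⟩
      rw [hbm']; cases b <;> simp
    have h3 : z ∈ cls (Lm m) m := by rw [hb]; exact closure_minimal h2 (hclsc b m) h1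
    exact hzpc.2 h3
  set AS : Set X := V ∪ (F ∩ SSb true) with hAS_def
  set AT : Set X := W ∪ (F ∩ SSb false) with hAT_def
  have hASne : AS.Nonempty := hVne.mono subset_union_left
  have hATne : AT.Nonempty := hWne.mono subset_union_left
  have sep1 : closure AT ∩ AS = ∅ := by
    rw [hAT_def, closure_union, ← subset_empty_iff]
    rintro z ⟨hcl, hzAS⟩
    rcases hcl with hclW | hclT
    · rcases hzAS with hzV | ⟨_, hzSS⟩
      · exact absurd (show z ∈ V ∩ closure W from ⟨hzV, hclW⟩)
          (by rw [open_disj_closure hVo hd]; exact notMem_empty z)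
      · exact hSSsub true hzSS (by simpa using closure_mono hWQ hclW)
    · rcases hzAS with hzV | ⟨hzF, hzSS⟩
      · have h1 : z ∈ closure (V ∩ (F ∩ SSb false)) := hVo.inter_closure ⟨hzV, hclT⟩
        have h2 : V ∩ (F ∩ SSb false) = ∅ := by
          rw [← subset_empty_iff]
          rintro y ⟨hyV, _, hySS⟩
          exact hSSsub false hySS (subset_closure (hVP hyV))
        rw [h2, closure_empty] at h1; exact h1
      · obtain ⟨m, hb, hzpc⟩ := (hSSb_mem true z).1 hzSS
        exact hkey true m hb z hzpc (by simpa using hclT)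
  have sep2 : closure AS ∩ AT = ∅ := by
    rw [hAS_def, closure_union, ← subset_empty_iff]
    rintro z ⟨hcl, hzAT⟩
    rcases hcl with hclV | hclS
    · rcases hzAT with hzW | ⟨_, hzSS⟩
      · exact absurd (show z ∈ W ∩ closure V from ⟨hzW, hclV⟩)
          (by rw [open_disj_closure hWo hd.symm]; exact notMem_empty z)
      · exact hSSsub false hzSS (by simpa using closure_mono hVP hclV)
    · rcases hzAT with hzW | ⟨hzF, hzSS⟩
      · have h1 : z ∈ closure (W ∩ (F ∩ SSb true)) := hWo.inter_closure ⟨hzW, hclS⟩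
        have h2 : W ∩ (F ∩ SSb true) = ∅ := by
          rw [← subset_empty_iff]
          rintro y ⟨hyW, _, hySS⟩
          exact hSSsub true hySS (subset_closure (hWQ hyW))
        rw [h2, closure_empty] at h1; exact h1
      · obtain ⟨m, hb, hzpc⟩ := (hSSb_mem false z).1 hzSS
        exact hkey false m hb z hzpc (by simpa using hclS)
  set V' : Set X := {y | infDist y AS < infDist y AT / 2} with hV'_def
  set W' : Set X := {y | infDist y AT < infDist y AS / 2} with hW'_def
  have hV'o : IsOpen V' := isOpen_lt (continuous_infDist_pt AS) ((continuous_infDist_pt AT).div_const 2)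
  have hW'o : IsOpen W' := isOpen_lt (continuous_infDist_pt AT) ((continuous_infDist_pt AS).div_const 2)
  have hASV' : AS ⊆ V' := by
    intro z hz
    have h1 : infDist z AS = 0 := infDist_zero_of_mem hz
    have h2 : z ∉ closure AT := by
      intro hc
      exact absurd (show z ∈ closure AT ∩ AS from ⟨hc, hz⟩) (by rw [sep1]; exact notMem_empty z)
    have h3 : infDist z AT ≠ 0 := fun h0 => h2 ((mem_closure_iff_infDist_zero hATne).2 h0)
    have h4 : (0:ℝ) ≤ infDist z AT := infDist_nonneg
    show infDist z AS < infDist z AT / 2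
    rw [h1]; cases' lt_or_eq_of_le h4 with h h; · linarith
    · exact absurd h.symm h3
  have hATW' : AT ⊆ W' := by
    intro z hz
    have h1 : infDist z AT = 0 := infDist_zero_of_mem hz
    have h2 : z ∉ closure AS := by
      intro hc
      exact absurd (show z ∈ closure AS ∩ AT from ⟨hc, hz⟩) (by rw [sep2]; exact notMem_empty z)
    have h3 : infDist z AS ≠ 0 := fun h0 => h2 ((mem_closure_iff_infDist_zero hASne).2 h0)
    have h4 : (0:ℝ) ≤ infDist z AS := infDist_nonneg
    show infDist z AT < infDist z AS / 2
    rw [h1]; cases' lt_or_eq_of_le h4 with h h; · linarith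
    · exact absurd h.symm h3
  refine ⟨V', W', hV'o, hW'o, ?_, fun v hv => hASV' (Or.inl hv), fun w hw => hATW' (Or.inl hw),
    hVne.mono (fun v hv => hASV' (Or.inl hv)), hWne.mono (fun w hw => hATW' (Or.inl hw)), ?_, ?_⟩
  · rw [Set.disjoint_left]
    intro z h1 h2
    have g1 : infDist z AS < infDist z AT / 2 := h1
    have g2 : infDist z AT < infDist z AS / 2 := h2
    have g3 : (0:ℝ) ≤ infDist z AS := infDist_nonneg
    linarith
  · intro z hz
    rcases hFSS hz with h | h
    · exact Or.inl (hASV' (Or.inr ⟨hz, h⟩))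
    · exact Or.inr (hATW' (Or.inr ⟨hz, h⟩))
  · rw [← subset_empty_iff]
    rintro y ⟨⟨hyV', hyW'⟩, hyA⟩
    have g1 : infDist y AS ≤ infDist y AT / 2 :=
      closure_lt_subset_le (continuous_infDist_pt AS) ((continuous_infDist_pt AT).div_const 2) hyV'
    have g2 : infDist y AT ≤ infDist y AS / 2 :=
      closure_lt_subset_le (continuous_infDist_pt AT) ((continuous_infDist_pt AS).div_const 2) hyW'
    have g3 : (0:ℝ) ≤ infDist y AS := infDist_nonneg
    have g4 : (0:ℝ) ≤ infDist y AT := infDist_nonneg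
    have e1 : infDist y AS = 0 := by linarith
    have e2 : infDist y AT = 0 := by linarith
    have hyAS : y ∈ closure AS := (mem_closure_iff_infDist_zero hASne).2 e1
    have hyAT : y ∈ closure AT := (mem_closure_iff_infDist_zero hATne).2 e2
    rw [hAS_def, closure_union] at hyAS
    rw [hAT_def, closure_union] at hyAT
    rcases hyAS with hS | hS <;> rcases hyAT with hT | hT
    · exact absurd (show y ∈ closure V ∩ closure W ∩ A from ⟨⟨hS, hT⟩, hyA⟩)
        (by rw [hinv]; exact notMem_empty y)
    · -- y ∈ closure V, y ∈ closure (F ∩ SSb false)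
      have hyP : y ∈ Pp := by
        have h1 : infDist y V = 0 := (mem_closure_iff_infDist_zero hVne).1 hS
        have h2 : y ∉ closure W := by
          intro hc
          exact absurd (show y ∈ closure V ∩ closure W ∩ A from ⟨⟨hS, hc⟩, hyA⟩)
            (by rw [hinv]; exact notMem_empty y)
        have h3 : infDist y W ≠ 0 := fun h0 => h2 ((mem_closure_iff_infDist_zero hWne).2 h0)
        have h4 : (0:ℝ) ≤ infDist y W := infDist_nonneg
        show infDist y V < infDist y W / 2
        rw [h1]; cases' lt_or_eq_of_le h4 with h h; · linarith
        · exact absurd h.symm h3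
      have h1 : y ∈ closure (Pp ∩ (F ∩ SSb false)) := hPpo.inter_closure ⟨hyP, hT⟩
      have h2 : Pp ∩ (F ∩ SSb false) = ∅ := by
        rw [← subset_empty_iff]
        rintro w ⟨hwP, _, hwSS⟩
        exact hSSsub false hwSS (subset_closure hwP)
      rw [h2, closure_empty] at h1; exact h1
    · -- y ∈ closure (F ∩ SSb true), y ∈ closure W
      have hyQ : y ∈ Qp := by
        have h1 : infDist y W = 0 := (mem_closure_iff_infDist_zero hWne).1 hT
        have h2 : y ∉ closure V := by
          intro hc
          exact absurd (show y ∈ closure V ∩ closure W ∩ A from ⟨⟨hc, hT⟩, hyA⟩)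
            (by rw [hinv]; exact notMem_empty y)
        have h3 : infDist y V ≠ 0 := fun h0 => h2 ((mem_closure_iff_infDist_zero hVne).2 h0)
        have h4 : (0:ℝ) ≤ infDist y V := infDist_nonneg
        show infDist y W < infDist y V / 2
        rw [h1]; cases' lt_or_eq_of_le h4 with h h; · linarith
        · exact absurd h.symm h3
      have h1 : y ∈ closure (Qp ∩ (F ∩ SSb true)) := hQpo.inter_closure ⟨hyQ, hS⟩
      have h2 : Qp ∩ (F ∩ SSb true) = ∅ := by
        rw [← subset_empty_iff]
        rintro w ⟨hwQ, _, hwSS⟩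
        exact hSSsub true hwSS (subset_closure hwQ)
      rw [h2, closure_empty] at h1; exact h1
    · -- both in closures of the F-parts
      have hyF : y ∈ F := hFc ⟨closure_mono inter_subset_left hS, hyA⟩
      rcases hFSS hyF with h | h
      · obtain ⟨m, hb, hzpc⟩ := (hSSb_mem true y).1 h
        exact hkey true m hb y hzpc (by simpa using hT)
      · obtain ⟨m, hb, hzpc⟩ := (hSSb_mem false y).1 h
        exact hkey false m hb y hzpc (by simpa using hS)

end Step
section Core1

variable {X : Type*} [MetricSpace X] [SecondCountableTopology X]

/-- Countable closed sum theorem for `Rel0`. -/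
theorem rel0_iUnion {A : Set X} {F : ℕ → Set X} (hFA : ∀ m, F m ⊆ A)
    (hFc : ∀ m, closure (F m) ∩ A ⊆ F m) (hF0 : ∀ m, Rel0 (F m))
    (hAF : A ⊆ ⋃ m, F m) : Rel0 A := by
  intro x hx U hU hxU
  rcases eq_empty_or_nonempty Uᶜ with hUc | hUcne
  · have : U = univ := by rw [← compl_empty_iff]; exact hUc
    exact ⟨univ, isOpen_univ, mem_univ x, this ▸ subset_rfl, by simp [frontier_univ]⟩
  -- base pair
  have hxnc : x ∉ closure Uᶜ := by
    rw [hU.isClosed_compl.closure_eq]; exact fun h => h hxU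
  have hr : infDist x Uᶜ ≠ 0 := fun h0 => hxnc ((mem_closure_iff_infDist_zero hUcne).2 h0)
  have hrpos : 0 < infDist x Uᶜ := lt_of_le_of_ne infDist_nonneg (Ne.symm hr)
  set r := infDist x Uᶜ with hr_def
  set V0 : Set X := Metric.ball x (r/4) with hV0_def
  set W0 : Set X := {y | infDist y Uᶜ < r/4} with hW0_def
  have hV0o : IsOpen V0 := Metric.isOpen_ball
  have hW0o : IsOpen W0 := isOpen_lt (continuous_infDist_pt Uᶜ) continuous_const
  have hV0ne : V0.Nonempty := ⟨x, Metric.mem_ball_self (by linarith)⟩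
  have hW0ne : W0.Nonempty := by
    obtain ⟨y, hy⟩ := hUcne
    exact ⟨y, by simp only [hW0_def, mem_setOf_eq, infDist_zero_of_mem hy]; linarith⟩
  have hdisj0 : closure V0 ∩ closure W0 = ∅ := by
    rw [← subset_empty_iff]
    rintro y ⟨h1, h2⟩
    have g1 : dist y x ≤ r/4 := by
      have := Metric.closure_ball_subset_closedBall h1
      rwa [Metric.mem_closedBall] at this
    have g2 : infDist y Uᶜ ≤ r/4 :=
      closure_lt_subset_le (continuous_infDist_pt Uᶜ) continuous_const h2
    have g3 : r ≤ infDist y Uᶜ + dist x y := infDist_le_infDist_add_dist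
    rw [dist_comm] at g3
    linarith
  -- the inductive construction
  set Pkg : Type _ := {p : Set X × Set X //
    IsOpen p.1 ∧ IsOpen p.2 ∧ p.1.Nonempty ∧ p.2.Nonempty ∧ Disjoint p.1 p.2 ∧
      closure p.1 ∩ closure p.2 ∩ A = ∅} with hPkg_def
  have hbase : IsOpen V0 ∧ IsOpen W0 ∧ V0.Nonempty ∧ W0.Nonempty ∧ Disjoint V0 W0 ∧
      closure V0 ∩ closure W0 ∩ A = ∅ := by
    refine ⟨hV0o, hW0o, hV0ne, hW0ne, ?_, by rw [hdisj0]; exact empty_inter A⟩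
    rw [Set.disjoint_left]
    intro z h1 h2
    have : z ∈ closure V0 ∩ closure W0 := ⟨subset_closure h1, subset_closure h2⟩
    rw [hdisj0] at this; exact this
  have hstep : ∀ (p : Pkg) (m : ℕ), ∃ q : Pkg,
      p.1.1 ⊆ q.1.1 ∧ p.1.2 ⊆ q.1.2 ∧ F m ⊆ q.1.1 ∪ q.1.2 := by
    rintro ⟨⟨V, W⟩, hVo, hWo, hVne, hWne, hd, hinv⟩ m
    obtain ⟨V', W', h1, h2, h3, h4, h5, h6, h7, h8, h9⟩ :=
      rel0_step (hFA m) (hFc m) (hF0 m) hVo hWo hVne hWne hd hinv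
    exact ⟨⟨⟨V', W'⟩, h1, h2, h6, h7, h3, h9⟩, h4, h5, h8⟩
  set seq : ℕ → Pkg := fun m =>
    Nat.rec (⟨⟨V0, W0⟩, hbase⟩ : Pkg) (fun m p => (hstep p m).choose) m with hseq_def
  have hseq0 : seq 0 = ⟨⟨V0, W0⟩, hbase⟩ := rfl
  have hseqS : ∀ m, seq (m+1) = (hstep (seq m) m).choose := fun m => rfl
  have hmono1 : ∀ m, (seq m).1.1 ⊆ (seq (m+1)).1.1 := by
    intro m; rw [hseqS m]; exact (hstep (seq m) m).choose_spec.1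
  have hmono2 : ∀ m, (seq m).1.2 ⊆ (seq (m+1)).1.2 := by
    intro m; rw [hseqS m]; exact (hstep (seq m) m).choose_spec.2.1
  have hFin : ∀ m, F m ⊆ (seq (m+1)).1.1 ∪ (seq (m+1)).1.2 := by
    intro m; rw [hseqS m]; exact (hstep (seq m) m).choose_spec.2.2
  have hmono1' : ∀ {k l}, k ≤ l → (seq k).1.1 ⊆ (seq l).1.1 := by
    intro k l h
    induction l with
    | zero => rw [Nat.le_zero.1 h]
    | succ l ih =>
      rcases Nat.le_succ_iff.1 h with h' | h'
      · exact (ih h').trans (hmono1 l)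
      · rw [h']
  have hmono2' : ∀ {k l}, k ≤ l → (seq k).1.2 ⊆ (seq l).1.2 := by
    intro k l h
    induction l with
    | zero => rw [Nat.le_zero.1 h]
    | succ l ih =>
      rcases Nat.le_succ_iff.1 h with h' | h'
      · exact (ih h').trans (hmono2 l)
      · rw [h']
  set Vf : Set X := ⋃ m, (seq m).1.1 with hVf_def
  set Wf : Set X := ⋃ m, (seq m).1.2 with hWf_def
  have hVfo : IsOpen Vf := isOpen_iUnion fun m => (seq m).2.1
  have hWfo : IsOpen Wf := isOpen_iUnion fun m => (seq m).2.2.1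
  have hVWdisj : Vf ∩ Wf = ∅ := by
    rw [← subset_empty_iff]
    rintro z ⟨h1, h2⟩
    obtain ⟨k, hk⟩ := mem_iUnion.1 h1
    obtain ⟨l, hl⟩ := mem_iUnion.1 h2
    have g1 : z ∈ (seq (max k l)).1.1 := hmono1' (le_max_left k l) hk
    have g2 : z ∈ (seq (max k l)).1.2 := hmono2' (le_max_right k l) hl
    exact Set.disjoint_left.1 (seq (max k l)).2.2.2.2.2.1 g1 g2
  have hxVf : x ∈ Vf := mem_iUnion.2 ⟨0, by rw [hseq0]; exact Metric.mem_ball_self (by linarith)⟩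
  have hVfU : Vf ⊆ U := by
    intro z hz
    by_contra hzU
    have hzW : z ∈ Wf := mem_iUnion.2 ⟨0, by
      rw [hseq0]
      show infDist z Uᶜ < r/4
      have hz0 : infDist z Uᶜ = 0 := infDist_zero_of_mem hzU
      rw [hz0]; linarith⟩
    exact absurd (show z ∈ Vf ∩ Wf from ⟨hz, hzW⟩) (by rw [hVWdisj]; exact notMem_empty z)
  refine ⟨Vf, hVfo, hxVf, hVfU, ?_⟩
  rw [← subset_empty_iff]
  rintro a ⟨hafr, haA⟩
  have haF : a ∈ ⋃ m, F m := hAF haA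
  obtain ⟨m, hm⟩ := mem_iUnion.1 haF
  have h1 : a ∉ Vf := by
    intro h
    exact absurd hafr (by rw [hVfo.frontier_eq]; exact fun hc => hc.2 h)
  have h2 : a ∈ Wf := by
    rcases hFin m hm with h | h
    · exact absurd (mem_iUnion.2 ⟨m+1, h⟩) h1
    · exact mem_iUnion.2 ⟨m+1, h⟩
  have h3 : Wf ∩ closure Vf = ∅ := open_disj_closure hWfo (by
    rw [Set.disjoint_left]; intro z hz1 hz2
    exact absurd (show z ∈ Vf ∩ Wf from ⟨hz2, hz1⟩) (by rw [hVWdisj]; exact notMem_empty z))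
  exact absurd (show a ∈ Wf ∩ closure Vf from ⟨h2, hafr.1⟩)
    (by rw [h3]; exact notMem_empty a)

end Core1
section Core2

variable {X : Type*} [MetricSpace X] [SecondCountableTopology X]

/-- A 0-dimensional subset of a second-countable metric space admits, for any open cover,
a countable pairwise disjoint open refinement covering it. -/
theorem rel0_coloring {Z : Set X} (hZ : Rel0 Z) {ι : Type*} [Nonempty ι]
    (Uc : ι → Set X) (hUo : ∀ i, IsOpen (Uc i)) (hZU : Z ⊆ ⋃ i, Uc i) :
    ∃ (E : ℕ → Set X) (c : ℕ → ι), (∀ k, IsOpen (E k)) ∧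
      (∀ k l, k ≠ l → E k ∩ E l = ∅) ∧ Z ⊆ ⋃ k, E k ∧ ∀ k, E k ⊆ Uc (c k) := by
  classical
  rcases eq_empty_or_nonempty Z with hZe | hZne
  · refine ⟨fun _ => ∅, fun _ => Classical.arbitrary ι, fun _ => isOpen_empty,
      fun _ _ _ => by simp, by simp [hZe], fun _ => empty_subset _⟩
  have hzdat : ∀ z : Z, ∃ Vi : Set X × ι, IsOpen Vi.1 ∧ (z : X) ∈ Vi.1 ∧
      frontier Vi.1 ∩ Z = ∅ ∧ Vi.1 ⊆ Uc Vi.2 := by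
    intro z
    obtain ⟨i, hi⟩ := mem_iUnion.1 (hZU z.2)
    obtain ⟨V, h1, h2, h3, h4⟩ := hZ z z.2 (Uc i) (hUo i) hi
    exact ⟨(V, i), h1, h2, h4, h3⟩
  choose dat hd1 hd2 hd3 hd4 using hzdat
  obtain ⟨T, hTc, hTU⟩ :=
    TopologicalSpace.isOpen_iUnion_countable (fun z : Z => (dat z).1) (fun z => hd1 z)
  have hZcov : Z ⊆ ⋃ z : Z, (dat z).1 := fun x hx => mem_iUnion.2 ⟨⟨x, hx⟩, hd2 _⟩
  have hTne : T.Nonempty := by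
    rcases hZne with ⟨x0, hx0⟩
    by_contra h
    rw [not_nonempty_iff_eq_empty] at h
    have h2 := hZcov hx0
    rw [← hTU] at h2
    simp [h] at h2
  obtain ⟨e, he⟩ := hTc.exists_eq_range hTne
  set Vm : ℕ → Set X := fun m => (dat (e m)).1 with hVm_def
  set cm : ℕ → ι := fun m => (dat (e m)).2 with hcm_def
  have hVmo : ∀ m, IsOpen (Vm m) := fun m => hd1 _
  have hVmfr : ∀ m, frontier (Vm m) ∩ Z = ∅ := fun m => hd3 _
  have hVmU : ∀ m, Vm m ⊆ Uc (cm m) := fun m => hd4 _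
  have hZVm : Z ⊆ ⋃ m, Vm m := by
    intro x hx
    have h2 := hZcov hx
    rw [← hTU] at h2
    obtain ⟨z, hzT, hz⟩ := mem_iUnion₂.1 h2
    rw [he] at hzT
    obtain ⟨m, rfl⟩ := hzT
    exact mem_iUnion.2 ⟨m, hz⟩
  set C : ℕ → Set X := fun k => (Z ∩ Vm k) \ ⋃ l ∈ Finset.range k, closure (Vm l) with hC_def
  have hCV : ∀ k, C k ⊆ Vm k := fun k z hz => hz.1.2
  have hCZ : ∀ k, C k ⊆ Z := fun k z hz => hz.1.1
  have hCmem : ∀ k z, z ∈ C k ↔ (z ∈ Z ∧ z ∈ Vm k ∧ ∀ l < k, z ∉ closure (Vm l)) := by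
    intro k z
    constructor
    · rintro ⟨⟨h1, h2⟩, h3⟩
      refine ⟨h1, h2, fun l hl hc => h3 (mem_iUnion₂.2 ⟨l, Finset.mem_range.2 hl, hc⟩)⟩
    · rintro ⟨h1, h2, h3⟩
      refine ⟨⟨h1, h2⟩, fun hc => ?_⟩
      obtain ⟨l, hl, hcl⟩ := mem_iUnion₂.1 hc
      exact h3 l (Finset.mem_range.1 hl) hcl
  have hCcov : ∀ z ∈ Z, ∃ k, z ∈ C k := by
    intro z hz
    have hex : ∃ m, z ∈ Vm m := mem_iUnion.1 (hZVm hz)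
    refine ⟨Nat.find hex, (hCmem _ _).2 ⟨hz, Nat.find_spec hex, fun l hl hc => ?_⟩⟩
    exact Nat.find_min hex hl (mem_of_closure_of_frontier (hVmo l) (hVmfr l) hz hc)
  have hCdisj : ∀ k l, k ≠ l → C k ∩ C l = ∅ := by
    have key : ∀ k l, k < l → C k ∩ C l = ∅ := by
      intro k l hkl
      rw [← subset_empty_iff]
      rintro z ⟨hzk, hzl⟩
      exact ((hCmem l z).1 hzl).2.2 k hkl (subset_closure (hCV k hzk))
    intro k l hkl
    rcases lt_or_gt_of_ne hkl with h | h
    · exact key k l h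
    · rw [inter_comm]; exact key l k h
  -- C k is closed in Z :
  have hCclosed : ∀ k, closure (C k) ∩ Z ⊆ C k := by
    rintro k y ⟨hyc, hyZ⟩
    have hyVk : y ∈ Vm k :=
      mem_of_closure_of_frontier (hVmo k) (hVmfr k) hyZ (closure_mono (hCV k) hyc)
    refine (hCmem k y).2 ⟨hyZ, hyVk, fun l hl hcl => ?_⟩
    have hyVl : y ∈ Vm l := mem_of_closure_of_frontier (hVmo l) (hVmfr l) hyZ hcl
    have h1 : y ∈ closure (Vm l ∩ C k) := (hVmo l).inter_closure ⟨hyVl, hyc⟩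
    have h2 : Vm l ∩ C k = ∅ := by
      rw [← subset_empty_iff]
      rintro w ⟨hw1, hw2⟩
      exact ((hCmem k w).1 hw2).2.2 l hl (subset_closure hw1)
    rw [h2, closure_empty] at h1
    exact h1
  -- C k is open in Z :
  have hCopen : ∀ k, C k ∩ closure (Z \ C k) = ∅ := by
    intro k
    rw [← subset_empty_iff]
    rintro y ⟨hyC, hycl⟩
    set N : Set X := Vm k \ ⋃ l ∈ Finset.range k, closure (Vm l) with hN_def
    have hNo : IsOpen N := (hVmo k).sdiff (Set.Finite.isClosed_biUnion
      (Finset.range k).finite_toSet (fun l _ => isClosed_closure))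
    have hyN : y ∈ N := ⟨hyC.1.2, hyC.2⟩
    have h1 : y ∈ closure (N ∩ (Z \ C k)) := hNo.inter_closure ⟨hyN, hycl⟩
    have h2 : N ∩ (Z \ C k) = ∅ := by
      rw [← subset_empty_iff]
      rintro w ⟨hwN, hwZ, hwC⟩
      exact hwC ⟨⟨hwZ, hwN.1⟩, hwN.2⟩
    rw [h2, closure_empty] at h1
    exact h1
  -- the separated open expansions
  set E : ℕ → Set X := fun k => Uc (cm k) ∩ {y | infEdist y (C k) < infEdist y (Z \ C k)}
    with hE_def
  have hEo : ∀ k, IsOpen (E k) := fun k =>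
    (hUo _).inter (isOpen_lt continuous_infEdist continuous_infEdist)
  refine ⟨E, cm, hEo, ?_, ?_, fun k => inter_subset_left⟩
  · intro k l hkl
    rw [← subset_empty_iff]
    rintro y ⟨⟨_, hy1⟩, ⟨_, hy2⟩⟩
    have g1 : infEdist y (C k) < infEdist y (Z \ C k) := hy1
    have g2 : infEdist y (C l) < infEdist y (Z \ C l) := hy2
    have s1 : C l ⊆ Z \ C k := by
      intro w hw
      refine ⟨hCZ l hw, fun hwk => ?_⟩
      exact absurd (show w ∈ C k ∩ C l from ⟨hwk, hw⟩)
        (by rw [hCdisj k l hkl]; exact notMem_empty w)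
    have s2 : C k ⊆ Z \ C l := by
      intro w hw
      refine ⟨hCZ k hw, fun hwl => ?_⟩
      exact absurd (show w ∈ C k ∩ C l from ⟨hw, hwl⟩)
        (by rw [hCdisj k l hkl]; exact notMem_empty w)
    have t1 : infEdist y (Z \ C k) ≤ infEdist y (C l) := infEdist_anti s1
    have t2 : infEdist y (Z \ C l) ≤ infEdist y (C k) := infEdist_anti s2
    exact absurd (g1.trans_le t1) (not_lt.2 (le_of_lt (g2.trans_le t2)))
  · intro z hz
    obtain ⟨k, hzk⟩ := hCcov z hz
    refine mem_iUnion.2 ⟨k, hVmU k (hCV k hzk), ?_⟩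
    show infEdist z (C k) < infEdist z (Z \ C k)
    have h1 : infEdist z (C k) = 0 := infEdist_zero_of_mem hzk
    have h2 : z ∉ closure (Z \ C k) := fun hc =>
      absurd (show z ∈ C k ∩ closure (Z \ C k) from ⟨hzk, hc⟩)
        (by rw [hCopen k]; exact notMem_empty z)
    have h3 : 0 < infEdist z (Z \ C k) := infEdist_pos_iff_notMem_closure.2 h2
    rw [h1]
    exact h3

end Core2
section Transfer

theorem Rel0.preimage_homeomorph {X Y : Type*} [TopologicalSpace X] [TopologicalSpace Y]
    (e : X ≃ₜ Y) {B : Set Y} (h : Rel0 B) : Rel0 (e ⁻¹' B) := by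
  intro x hx U hU hxU
  obtain ⟨V', h1, h2, h3, h4⟩ := h (e x) hx (e.symm ⁻¹' U)
    (e.symm.continuous.isOpen_preimage U hU) (by simpa using hxU)
  refine ⟨e ⁻¹' V', e.continuous.isOpen_preimage V' h1, h2, ?_, ?_⟩
  · intro y hy
    have := h3 hy
    simpa using this
  · rw [← e.preimage_frontier, ← preimage_inter, h4, preimage_empty]

theorem Rel0.image_val {M : Type*} [TopologicalSpace M] {U : Set M} (hU : IsOpen U)
    {B : Set ↥U} (h : Rel0 B) : Rel0 ((↑) '' B : Set M) := by
  rintro x ⟨x', hx', rfl⟩ W hW hxW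
  obtain ⟨V', h1, h2, h3, h4⟩ := h x' hx' (Subtype.val ⁻¹' W)
    (continuous_subtype_val.isOpen_preimage W hW) hxW
  refine ⟨Subtype.val '' V', hU.isOpenMap_subtype_val V' h1, ⟨x', h2, rfl⟩, ?_, ?_⟩
  · rintro y ⟨y', hy', rfl⟩
    exact h3 hy'
  · rw [← subset_empty_iff]
    rintro z ⟨hzfr, z', hz', rfl⟩
    have hcl : z' ∈ closure V' := by
      rw [closure_subtype]
      exact hzfr.1
    have hVopen : IsOpen (Subtype.val '' V') := hU.isOpenMap_subtype_val V' h1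
    have hnotV : z' ∉ V' := fun hv =>
      hzfr.2 (by rw [hVopen.interior_eq]; exact ⟨z', hv, rfl⟩)
    have : z' ∈ frontier V' := ⟨hcl, by rwa [h1.interior_eq]⟩
    exact absurd (show z' ∈ frontier V' ∩ B from ⟨this, hz'⟩)
      (by rw [h4]; exact notMem_empty z')

end Transfer

section Pieces

/-- The explicit 0-dimensional pieces of `ℝⁿ`: coordinates in `S` are fixed rationals,
the others are irrational. -/
theorem rel0_ratPiece (n : ℕ) (S : Finset (Fin n)) (q : Fin n → ℚ) :
    Rel0 {y : Fin n → ℝ | (∀ t ∈ S, y t = (q t : ℝ)) ∧ ∀ t ∉ S, Irrational (y t)} := by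
  classical
  intro x hx U hU hxU
  obtain ⟨ε, hε, hball⟩ := Metric.isOpen_iff.1 hU x hxU
  have hab : ∀ t : Fin n, ∃ ab : ℝ × ℝ,
      (ab.1 ∈ Ioo (x t - ε/2) (x t)) ∧ (ab.2 ∈ Ioo (x t) (x t + ε/2)) ∧
      (t ∈ S → Irrational ab.1 ∧ Irrational ab.2) ∧
      (t ∉ S → (∃ r : ℚ, (r:ℝ) = ab.1) ∧ ∃ r : ℚ, (r:ℝ) = ab.2) := by
    intro t
    by_cases ht : t ∈ S
    · obtain ⟨a, ha, ha1, ha2⟩ := exists_irrational_btwn (show x t - ε/2 < x t by linarith)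
      obtain ⟨b, hb, hb1, hb2⟩ := exists_irrational_btwn (show x t < x t + ε/2 by linarith)
      exact ⟨(a, b), ⟨ha1, ha2⟩, ⟨hb1, hb2⟩, fun _ => ⟨ha, hb⟩, fun h => absurd ht h⟩
    · obtain ⟨a, ha1, ha2⟩ := exists_rat_btwn (show x t - ε/2 < x t by linarith)
      obtain ⟨b, hb1, hb2⟩ := exists_rat_btwn (show x t < x t + ε/2 by linarith)
      exact ⟨((a:ℝ), (b:ℝ)), ⟨ha1, ha2⟩, ⟨hb1, hb2⟩, fun h => absurd h ht,
        fun _ => ⟨⟨a, rfl⟩, ⟨b, rfl⟩⟩⟩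
  choose ab hab1 hab2 hab3 hab4 using hab
  set a : Fin n → ℝ := fun t => (ab t).1 with ha_def
  set b : Fin n → ℝ := fun t => (ab t).2 with hb_def
  have haxb : ∀ t, a t < x t ∧ x t < b t := fun t => ⟨(hab1 t).2, (hab2 t).1⟩
  have hablt : ∀ t, a t < b t := fun t => (haxb t).1.trans (haxb t).2
  set V : Set (Fin n → ℝ) := Set.pi univ (fun t => Ioo (a t) (b t)) with hV_def
  have hVo : IsOpen V := isOpen_set_pi finite_univ (fun t _ => isOpen_Ioo)
  have hxV : x ∈ V := fun t _ => ⟨(haxb t).1, (haxb t).2⟩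
  have hVU : V ⊆ U := by
    intro y hy
    apply hball
    rw [Metric.mem_ball, dist_pi_lt_iff hε]
    intro t
    have h1 := hy t (mem_univ t)
    have h2 := hab1 t
    have h3 := hab2 t
    rw [Real.dist_eq, abs_lt]
    simp only [mem_Ioo] at h1 h2 h3
    constructor <;> nlinarith [h1.1, h1.2, h2.1, h2.2, h3.1, h3.2]
  refine ⟨V, hVo, hxV, hVU, ?_⟩
  rw [← subset_empty_iff]
  rintro y ⟨hyfr, hyP⟩
  have hycl : y ∈ Set.pi univ (fun t => Icc (a t) (b t)) := by
    have h1 : y ∈ closure V := hyfr.1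
    rw [hV_def, closure_pi_set] at h1
    intro t ht
    have h2 : y t ∈ closure (Ioo (a t) (b t)) := h1 t ht
    show y t ∈ Icc (a t) (b t)
    rwa [closure_Ioo (hablt t).ne] at h2
  have hynV : y ∉ V := by
    intro hv
    exact hyfr.2 (by rwa [hVo.interior_eq])
  have hexists : ∃ t, y t = a t ∨ y t = b t := by
    by_contra hc
    push_neg at hc
    apply hynV
    intro t _
    have h1 := hycl t (mem_univ t)
    rcases h1 with ⟨h1a, h1b⟩
    rcases lt_or_eq_of_le h1a with h | h
    · rcases lt_or_eq_of_le h1b with h' | h'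
      · exact ⟨h, h'⟩
      · exact absurd h' (hc t).2
    · exact absurd h.symm (hc t).1
  obtain ⟨t, ht⟩ := hexists
  by_cases htS : t ∈ S
  · have hyq : y t = (q t : ℝ) := hyP.1 t htS
    obtain ⟨hia, hib⟩ := hab3 t htS
    rcases ht with h | h
    · exact (hia ⟨q t, by rw [← hyq]; exact h⟩).elim
    · exact (hib ⟨q t, by rw [← hyq]; exact h⟩).elim
  · have hyirr : Irrational (y t) := hyP.2 t htS
    obtain ⟨⟨r1, hr1⟩, ⟨r2, hr2⟩⟩ := hab4 t htS
    rcases ht with h | h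
    · exact hyirr ⟨r1, by rw [hr1, h]⟩
    · exact hyirr ⟨r2, by rw [hr2, h]⟩

end Pieces
section Plumbing

variable {M : Type*} [TopologicalSpace M] {n : ℕ}

theorem chart_compact_nhd {U : Set M} (hUo : IsOpen U) (ψ : ↥U ≃ₜ (Fin n → ℝ))
    {x : M} (hx : x ∈ U) : ∃ K : Set M, IsCompact K ∧ K ∈ 𝓝 x := by
  set x' : ↥U := ⟨x, hx⟩
  set K : Set M := Subtype.val '' (ψ.symm '' Metric.closedBall (ψ x') 1) with hK_def
  have hKc : IsCompact K :=
    (((isCompact_closedBall _ 1).image ψ.symm.continuous).image continuous_subtype_val)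
  have hopen : IsOpen (Subtype.val '' (ψ.symm '' Metric.ball (ψ x') 1)) :=
    hUo.isOpenMap_subtype_val _ (ψ.symm.isOpenMap _ Metric.isOpen_ball)
  have hxmem : x ∈ Subtype.val '' (ψ.symm '' Metric.ball (ψ x') 1) :=
    ⟨x', ⟨ψ x', Metric.mem_ball_self one_pos, by simp⟩, rfl⟩
  have hsub : Subtype.val '' (ψ.symm '' Metric.ball (ψ x') 1) ⊆ K :=
    image_mono (image_mono Metric.ball_subset_closedBall)
  exact ⟨K, hKc, Filter.mem_of_superset (hopen.mem_nhds hxmem) hsub⟩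

theorem weaklyLocallyCompact_of_charts
    (hch : ∀ x : M, ∃ U : Set M, IsOpen U ∧ x ∈ U ∧ Nonempty (U ≃ₜ (Fin n → ℝ))) :
    WeaklyLocallyCompactSpace M := by
  refine ⟨fun x => ?_⟩
  obtain ⟨U, hUo, hxU, ⟨ψ⟩⟩ := hch x
  exact chart_compact_nhd hUo ψ hxU

theorem sigmaCompact_of_connected [T2Space M] [WeaklyLocallyCompactSpace M]
    [ParacompactSpace M] [ConnectedSpace M] : SigmaCompactSpace M := by
  -- cover by relatively compact open sets
  have hcov : ∀ x : M, ∃ V : Set M, IsOpen V ∧ x ∈ V ∧ IsCompact (closure V) := by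
    intro x
    obtain ⟨K, hKc, hKn⟩ := exists_compact_mem_nhds x
    refine ⟨interior K, isOpen_interior, mem_interior_iff_mem_nhds.2 hKn, ?_⟩
    exact hKc.of_isClosed_subset isClosed_closure
      ((closure_mono interior_subset).trans hKc.isClosed.closure_eq.subset)
  choose V hVo hVx hVcc using hcov
  obtain ⟨t, hto, htU, htlf, hts⟩ := precise_refinement V hVo
    (by rw [eq_univ_iff_forall]; exact fun x => mem_iUnion.2 ⟨x, hVx x⟩)
  have htcc : ∀ b, IsCompact (closure (t b)) := by
    intro b
    exact (hVcc b).of_isClosed_subset isClosed_closure (closure_mono (hts b))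
  obtain ⟨x0⟩ : Nonempty M := inferInstance
  -- the chain
  set C : ℕ → Set M := fun m =>
    Nat.rec ({x0} : Set M)
      (fun _ Cm => ⋃ b ∈ {b | (t b ∩ Cm).Nonempty}, closure (t b)) m with hC_def
  have hCS : ∀ m, C (m+1) = ⋃ b ∈ {b | (t b ∩ C m).Nonempty}, closure (t b) := fun m => rfl
  have hCcomp : ∀ m, IsCompact (C m) := by
    intro m
    induction m with
    | zero => exact isCompact_singleton
    | succ m ih =>
      rw [hCS m]
      exact (htlf.finite_nonempty_inter_compact ih).isCompact_biUnion fun b _ => htcc b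
  have hCmono : ∀ m, C m ⊆ C (m+1) := by
    intro m z hz
    have : z ∈ ⋃ b, t b := by rw [htU]; exact mem_univ z
    obtain ⟨b, hb⟩ := mem_iUnion.1 this
    rw [hCS m]
    exact mem_biUnion ⟨z, hb, hz⟩ (subset_closure hb)
  set O : Set M := ⋃ m, C m with hO_def
  have hOopen : IsOpen O := by
    have hOD : O = ⋃ m, ⋃ b ∈ {b | (t b ∩ C m).Nonempty}, t b := by
      apply Subset.antisymm
      · rintro z hz
        obtain ⟨m, hm⟩ := mem_iUnion.1 hz
        have : z ∈ ⋃ b, t b := by rw [htU]; exact mem_univ z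
        obtain ⟨b, hb⟩ := mem_iUnion.1 this
        exact mem_iUnion.2 ⟨m, mem_biUnion ⟨z, hb, hm⟩ hb⟩
      · rintro z hz
        obtain ⟨m, hm⟩ := mem_iUnion.1 hz
        obtain ⟨b, hb, hzb⟩ := mem_iUnion₂.1 hm
        exact mem_iUnion.2 ⟨m+1, by rw [hCS m]; exact mem_biUnion hb (subset_closure hzb)⟩
    rw [hOD]
    exact isOpen_iUnion fun m => isOpen_biUnion fun b _ => hto b
  have hOclosed : IsClosed O := by
    rw [← closure_subset_iff_isClosed]
    intro z hz
    have : z ∈ ⋃ b, t b := by rw [htU]; exact mem_univ z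
    obtain ⟨b, hb⟩ := mem_iUnion.1 this
    have hmeets : (t b ∩ O).Nonempty := by
      rcases mem_closure_iff.1 hz (t b) (hto b) hb with ⟨w, hw1, hw2⟩
      exact ⟨w, hw1, hw2⟩
    obtain ⟨w, hw1, hw2⟩ := hmeets
    obtain ⟨m, hm⟩ := mem_iUnion.1 hw2
    refine mem_iUnion.2 ⟨m+1, ?_⟩
    rw [hCS m]
    exact mem_biUnion ⟨w, hw1, hm⟩ (subset_closure hb)
  have hOuniv : O = univ :=
    IsClopen.eq_univ ⟨hOclosed, hOopen⟩ ⟨x0, mem_iUnion.2 ⟨0, rfl⟩⟩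
  exact ⟨⟨C, hCcomp, hOuniv⟩⟩

theorem secondCountable_of_sigmaCompact_metric {Y : Type*} [MetricSpace Y]
    [SigmaCompactSpace Y] : SecondCountableTopology Y := by
  have h1 : TopologicalSpace.IsSeparable (univ : Set Y) := by
    rw [← iUnion_compactCovering]
    exact TopologicalSpace.isSeparable_iUnion.2
      fun m => (isCompact_compactCovering Y m).isSeparable
  have h2 : TopologicalSpace.SeparableSpace Y := TopologicalSpace.isSeparable_univ_iff.1 h1
  exact UniformSpace.secondCountable_of_separable Y

end Plumbing
section Squash

variable {E : Type*} [NormedAddCommGroup E] [NormedSpace ℝ E]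

theorem squash_cont : Continuous fun y : E => (1 + ‖y‖)⁻¹ • y :=
  (((continuous_const.add continuous_norm).inv₀ (fun y => ne_of_gt (add_pos_of_pos_of_nonneg one_pos (norm_nonneg y)))).smul continuous_id)

theorem squash_norm_le (y : E) : ‖(1 + ‖y‖)⁻¹ • y‖ ≤ 1 := by
  rw [norm_smul, Real.norm_eq_abs, abs_inv, abs_of_pos (by positivity)]
  rw [inv_mul_le_iff₀ (by positivity)]
  have := norm_nonneg y
  linarith

theorem squash_inj : Function.Injective (fun y : E => (1 + ‖y‖)⁻¹ • y) := by
  intro a b h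
  simp only at h
  have hna : ‖(1 + ‖a‖)⁻¹ • a‖ = (1 + ‖a‖)⁻¹ * ‖a‖ := by
    rw [norm_smul, Real.norm_eq_abs, abs_inv, abs_of_pos (by positivity)]
  have hnb : ‖(1 + ‖b‖)⁻¹ • b‖ = (1 + ‖b‖)⁻¹ * ‖b‖ := by
    rw [norm_smul, Real.norm_eq_abs, abs_inv, abs_of_pos (by positivity)]
  have hn : (1 + ‖a‖)⁻¹ * ‖a‖ = (1 + ‖b‖)⁻¹ * ‖b‖ := by
    rw [← hna, ← hnb, h]
  have ha0 : (0:ℝ) < 1 + ‖a‖ := by positivity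
  have hb0 : (0:ℝ) < 1 + ‖b‖ := by positivity
  have hab : ‖a‖ = ‖b‖ := by
    field_simp at hn
    nlinarith [norm_nonneg a, norm_nonneg b]
  rw [hab] at h
  exact smul_right_injective E (inv_ne_zero (by positivity)) h

end Squash
section Decomposition

variable {M : Type*} [MetricSpace M] [SecondCountableTopology M] [Nonempty M] {n : ℕ}

theorem exists_colored_pieces
    (hch : ∀ x : M, ∃ U : Set M, IsOpen U ∧ x ∈ U ∧ Nonempty (U ≃ₜ (Fin n → ℝ))) :
    ∃ (UU : ℕ → Set M) (E : Fin (n+1) → ℕ → Set M) (c : Fin (n+1) → ℕ → ℕ),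
      (∀ i, IsOpen (UU i)) ∧ (∀ i, Nonempty (↥(UU i) ≃ₜ (Fin n → ℝ))) ∧
      (∀ j k, IsOpen (E j k)) ∧ (∀ j k l, k ≠ l → E j k ∩ E j l = ∅) ∧
      (∀ x : M, ∃ j k, x ∈ E j k) ∧ (∀ j k, E j k ⊆ UU (c j k)) := by
  classical
  choose Uf hUfo hUfx hUfψ using hch
  obtain ⟨T, hTc, hTU⟩ := TopologicalSpace.isOpen_iUnion_countable Uf hUfo
  have hTne : T.Nonempty := by
    obtain ⟨x0⟩ : Nonempty M := inferInstance
    by_contra h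
    rw [not_nonempty_iff_eq_empty] at h
    have : x0 ∈ ⋃ x, Uf x := mem_iUnion.2 ⟨x0, hUfx x0⟩
    rw [← hTU] at this
    simp [h] at this
  obtain ⟨e, he⟩ := hTc.exists_eq_range hTne
  set UU : ℕ → Set M := fun i => Uf (e i) with hUU_def
  have hUUo : ∀ i, IsOpen (UU i) := fun i => hUfo _
  have hUUψ : ∀ i, Nonempty (↥(UU i) ≃ₜ (Fin n → ℝ)) := fun i => hUfψ _
  have hUUcov : ∀ x : M, ∃ i, x ∈ UU i := by
    intro x
    have : x ∈ ⋃ y, Uf y := mem_iUnion.2 ⟨x, hUfx x⟩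
    rw [← hTU] at this
    obtain ⟨z, hzT, hz⟩ := mem_iUnion₂.1 this
    rw [he] at hzT
    obtain ⟨i, rfl⟩ := hzT
    exact ⟨i, hz⟩
  set ψ : ∀ i, ↥(UU i) ≃ₜ (Fin n → ℝ) := fun i => Classical.choice (hUUψ i) with hψ_def
  -- first-chart decomposition
  set B : ℕ → Set M := fun i => UU i \ ⋃ l ∈ Finset.range i, UU l with hB_def
  have hBmem : ∀ i x, x ∈ B i ↔ x ∈ UU i ∧ ∀ l < i, x ∉ UU l := by
    intro i x
    constructor
    · rintro ⟨h1, h2⟩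
      exact ⟨h1, fun l hl hx => h2 (mem_iUnion₂.2 ⟨l, Finset.mem_range.2 hl, hx⟩)⟩
    · rintro ⟨h1, h2⟩
      refine ⟨h1, fun hx => ?_⟩
      obtain ⟨l, hl, hxl⟩ := mem_iUnion₂.1 hx
      exact h2 l (Finset.mem_range.1 hl) hxl
  have hBcov : ∀ x : M, ∃ i, x ∈ B i := by
    intro x
    have hex : ∃ i, x ∈ UU i := hUUcov x
    exact ⟨Nat.find hex, (hBmem _ _).2 ⟨Nat.find_spec hex, fun l hl => Nat.find_min hex hl⟩⟩
  have hBdisj : ∀ i i', i ≠ i' → ∀ x, x ∈ B i → x ∈ B i' → False := by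
    have key : ∀ i i', i < i' → ∀ x, x ∈ B i → x ∈ B i' → False := by
      intro i i' hii x hx hx'
      exact ((hBmem i' x).1 hx').2 i hii ((hBmem i x).1 hx).1
    intro i i' hii x hx hx'
    rcases lt_or_gt_of_ne hii with h | h
    · exact key i i' h x hx hx'
    · exact key i' i h x hx' hx
  -- closed pieces of B i
  set Cc : ℕ → ℕ → Set M := fun i k =>
    {x | x ∉ ⋃ l ∈ Finset.range i, UU l} ∩ {x | ((k:ℝ≥0∞)+1)⁻¹ ≤ infEdist x (UU i)ᶜ}
    with hCc_def
  have hCcc : ∀ i k, IsClosed (Cc i k) := by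
    intro i k
    apply IsClosed.inter
    · rw [show {x : M | x ∉ ⋃ l ∈ Finset.range i, UU l} = (⋃ l ∈ Finset.range i, UU l)ᶜ from rfl]
      exact (isOpen_biUnion fun l _ => hUUo l).isClosed_compl
    · exact isClosed_le continuous_const continuous_infEdist
  have hCcU : ∀ i k, Cc i k ⊆ UU i := by
    rintro i k x ⟨_, hx2⟩
    have hpos : 0 < infEdist x (UU i)ᶜ := lt_of_lt_of_le
      (ENNReal.inv_pos.2 (ENNReal.add_ne_top.2 ⟨ENNReal.natCast_ne_top k, ENNReal.one_ne_top⟩)) hx2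
    have := infEdist_pos_iff_notMem_closure.1 hpos
    by_contra hxU
    exact this (subset_closure hxU)
  have hCcB : ∀ i k, Cc i k ⊆ B i := by
    rintro i k x hx
    exact ⟨hCcU i k hx, hx.1⟩
  have hBCc : ∀ i x, x ∈ B i → ∃ k, x ∈ Cc i k := by
    rintro i x ⟨hx1, hx2⟩
    have hpos : infEdist x (UU i)ᶜ ≠ 0 := by
      refine pos_iff_ne_zero.1 (infEdist_pos_iff_notMem_closure.2 ?_)
      rw [(hUUo i).isClosed_compl.closure_eq]
      exact fun h => h hx1
    obtain ⟨m, hm⟩ := ENNReal.exists_inv_nat_lt hpos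
    refine ⟨m, hx2, ?_⟩
    calc ((m:ℝ≥0∞)+1)⁻¹ ≤ (m:ℝ≥0∞)⁻¹ := ENNReal.inv_le_inv.2 (le_self_add)
    _ ≤ infEdist x (UU i)ᶜ := hm.le
  -- rational-coordinate pieces
  set P : Finset (Fin n) → (Fin n → ℚ) → Set (Fin n → ℝ) := fun S q =>
    {y | (∀ t ∈ S, y t = (q t : ℝ)) ∧ ∀ t ∉ S, Irrational (y t)} with hP_def
  set PM : ℕ → Finset (Fin n) → (Fin n → ℚ) → Set M := fun i S q =>
    Subtype.val '' ((ψ i) ⁻¹' (P S q)) with hPM_def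
  have hPM0 : ∀ i S q, Rel0 (PM i S q) :=
    fun i S q => ((rel0_ratPiece n S q).preimage_homeomorph (ψ i)).image_val (hUUo i)
  set rat : ℝ → Prop := fun y => ∃ r : ℚ, (r:ℝ) = y with hrat_def
  set Sof : (Fin n → ℝ) → Finset (Fin n) := fun y => Finset.univ.filter (fun t => rat (y t))
    with hSof_def
  set Hj : ℕ → Set (Fin n → ℝ) := fun j => {y | (Sof y).card = j} with hHj_def
  set ZM : ℕ → ℕ → Set M := fun i j => Subtype.val '' ((ψ i) ⁻¹' (Hj j)) with hZM_def
  set Z : Fin (n+1) → Set M := fun j => ⋃ i, B i ∩ ZM i (j:ℕ) with hZ_def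
  have hZcov : ∀ x : M, ∃ j : Fin (n+1), x ∈ Z j := by
    intro x
    obtain ⟨i, hxB⟩ := hBcov x
    have hxU : x ∈ UU i := ((hBmem i x).1 hxB).1
    set y := ψ i ⟨x, hxU⟩ with hy_def
    have hcard : (Sof y).card ≤ n := by
      calc (Sof y).card ≤ Finset.univ.card := Finset.card_filter_le _ _
      _ = n := by simp
    refine ⟨⟨(Sof y).card, Nat.lt_succ_of_le hcard⟩, mem_iUnion.2 ⟨i, hxB, ?_⟩⟩
    exact ⟨⟨x, hxU⟩, rfl, rfl⟩
  -- each Z j is 0-dimensional via the countable sum theorem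
  have hZ0 : ∀ j : Fin (n+1), Rel0 (Z j) := by
    intro j
    set ι : Type := ℕ × ℕ × Finset (Fin n) × (Fin n → ℚ) with hι_def
    have : Countable ι := by infer_instance
    have : Nonempty ι := by
      refine ⟨⟨0, 0, ∅, fun _ => 0⟩⟩
    obtain ⟨g, hg⟩ := exists_surjective_nat ι
    set D : ι → Set M := fun p =>
      if p.2.2.1.card = (j:ℕ) then Cc p.1 p.2.1 ∩ PM p.1 p.2.2.1 p.2.2.2 else ∅ with hD_def
    have hDZ : ∀ p, D p ⊆ Z j := by
      intro p x hx
      simp only [hD_def] at hx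
      split_ifs at hx with hcard
      · obtain ⟨hx1, hx2⟩ := hx
        refine mem_iUnion.2 ⟨p.1, hCcB _ _ hx1, ?_⟩
        obtain ⟨x', hx', hval⟩ := hx2
        refine ⟨x', ?_, hval⟩
        show (Sof (ψ p.1 x')).card = (j:ℕ)
        rw [← hcard]
        congr 1
        apply Finset.ext
        intro t
        simp only [hSof_def, Finset.mem_filter, Finset.mem_univ, true_and]
        constructor
        · intro ⟨r, hr⟩
          by_contra htS
          exact (hx'.2 t htS) ⟨r, hr⟩
        · intro htS
          exact ⟨p.2.2.2 t, (hx'.1 t htS).symm⟩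
      · exact absurd hx (notMem_empty x)
    have hDcl : ∀ p, closure (D p) ∩ Z j ⊆ D p := by
      intro p z hz
      obtain ⟨hzc, hzZ⟩ := hz
      simp only [hD_def] at hzc ⊢
      split_ifs at hzc ⊢ with hcard
      · have hzCc : z ∈ Cc p.1 p.2.1 :=
          (hCcc p.1 p.2.1).closure_subset_iff.2 subset_rfl
            (closure_mono inter_subset_left hzc)
        refine ⟨hzCc, ?_⟩
        have hzU : z ∈ UU p.1 := hCcU _ _ hzCc
        -- z is in chart p.1 ; identify its Z-data
        obtain ⟨i', hzB', hzZM'⟩ := mem_iUnion.1 hzZ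
        have hii' : i' = p.1 := by
          by_contra hne
          exact hBdisj i' p.1 hne z hzB' (hCcB _ _ hzCc)
        rw [hii'] at hzZM'
        obtain ⟨z', hz', hzval⟩ := hzZM'
        have hz'' : z' = ⟨z, hzU⟩ := Subtype.ext hzval
        rw [hz''] at hz'
        -- closure information in the chart
        have hclsub : z ∈ closure (PM p.1 p.2.2.1 p.2.2.2) :=
          closure_mono inter_subset_right hzc
        have hz'cl : (⟨z, hzU⟩ : ↥(UU p.1)) ∈ closure ((ψ p.1) ⁻¹' (P p.2.2.1 p.2.2.2)) := by
          rw [closure_subtype]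
          exact hclsub
        have hyQQ : ∀ t ∈ p.2.2.1, (ψ p.1 ⟨z, hzU⟩) t = (p.2.2.2 t : ℝ) := by
          have h1 : (⟨z, hzU⟩ : ↥(UU p.1)) ∈ (ψ p.1) ⁻¹' closure (P p.2.2.1 p.2.2.2) := by
            rw [Homeomorph.preimage_closure]
            exact hz'cl
          have hQc : IsClosed {y : Fin n → ℝ | ∀ t ∈ p.2.2.1, y t = (p.2.2.2 t : ℝ)} := by
            have hrw : {y : Fin n → ℝ | ∀ t ∈ p.2.2.1, y t = (p.2.2.2 t : ℝ)} =
                ⋂ t ∈ p.2.2.1, {y | y t = (p.2.2.2 t : ℝ)} := by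
              ext y; simp
            rw [hrw]
            exact isClosed_biInter fun t _ =>
              isClosed_eq (continuous_apply t) continuous_const
          have h2 : closure (P p.2.2.1 p.2.2.2) ⊆
              {y : Fin n → ℝ | ∀ t ∈ p.2.2.1, y t = (p.2.2.2 t : ℝ)} :=
            closure_minimal (fun y hy => hy.1) hQc
          exact h2 h1
        -- now conclude membership in the piece
        have hS : Sof (ψ p.1 ⟨z, hzU⟩) = p.2.2.1 := by
          apply (Finset.eq_of_subset_of_card_le ?_ ?_).symm
          · intro t ht
            simp only [hSof_def, Finset.mem_filter, Finset.mem_univ, true_and]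
            exact ⟨p.2.2.2 t, (hyQQ t ht).symm⟩
          · have hzcard : (Sof (ψ p.1 ⟨z, hzU⟩)).card = (j:ℕ) := hz'
            rw [hzcard, hcard]
        refine ⟨⟨z, hzU⟩, ⟨?_, ?_⟩, rfl⟩
        · exact hyQQ
        · intro t htS
          intro ⟨r, hr⟩
          apply htS
          rw [← hS]
          simp only [hSof_def, Finset.mem_filter, Finset.mem_univ, true_and]
          exact ⟨r, hr⟩
      · rw [closure_empty] at hzc
        exact hzc
    have hD0 : ∀ p, Rel0 (D p) := by
      intro p
      simp only [hD_def]
      split_ifs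
      · exact (hPM0 p.1 p.2.2.1 p.2.2.2).mono inter_subset_right
      · exact rel0_empty
    have hZD : Z j ⊆ ⋃ m, D (g m) := by
      intro x hx
      obtain ⟨i, hxB, hxZM⟩ := mem_iUnion.1 hx
      obtain ⟨k, hxk⟩ := hBCc i x hxB
      obtain ⟨x', hx', hval⟩ := hxZM
      set y := ψ i x' with hy_def
      set S := Sof y with hS_def
      set q : Fin n → ℚ := fun t => if h : rat (y t) then h.choose else 0 with hq_def
      have hxPM : x ∈ PM i S q := by
        refine ⟨x', ⟨?_, ?_⟩, hval⟩
        · intro t ht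
          simp only [hS_def, hSof_def, Finset.mem_filter] at ht
          have hrt : rat (y t) := ht.2
          show y t = (q t : ℝ)
          rw [hq_def]
          simp only [hrt, dif_pos]
          exact hrt.choose_spec.symm
        · intro t ht
          simp only [hS_def, hSof_def, Finset.mem_filter, Finset.mem_univ, true_and] at ht
          intro ⟨r, hr⟩
          exact ht ⟨r, hr⟩
      obtain ⟨m, hm⟩ := hg (i, k, S, q)
      refine mem_iUnion.2 ⟨m, ?_⟩
      rw [hm]
      simp only [hD_def]
      have hScard : S.card = (j:ℕ) := hx'
      rw [if_pos hScard]
      exact ⟨hxk, hxPM⟩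
    exact rel0_iUnion (fun m => hDZ (g m)) (fun m => hDcl (g m)) (fun m => hD0 (g m)) hZD
  -- color each Z j
  have hcol : ∀ j : Fin (n+1), ∃ (E : ℕ → Set M) (c : ℕ → ℕ), (∀ k, IsOpen (E k)) ∧
      (∀ k l, k ≠ l → E k ∩ E l = ∅) ∧ Z j ⊆ ⋃ k, E k ∧ ∀ k, E k ⊆ UU (c k) := by
    intro j
    exact rel0_coloring (hZ0 j) UU hUUo
      (fun x _ => mem_iUnion.2 (hUUcov x))
  choose E c hEo hEdisj hEcov hEU using hcol
  refine ⟨UU, E, c, hUUo, hUUψ, hEo, hEdisj, ?_, hEU⟩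
  intro x
  obtain ⟨j, hj⟩ := hZcov x
  obtain ⟨k, hk⟩ := mem_iUnion.1 (hEcov j hj)
  exact ⟨j, k, hk⟩

end Decomposition
section GoodCover

variable {M : Type*} [MetricSpace M] [SecondCountableTopology M] [Nonempty M] {n : ℕ}

theorem exists_good_cover
    (hch : ∀ x : M, ∃ U : Set M, IsOpen U ∧ x ∈ U ∧ Nonempty (U ≃ₜ (Fin n → ℝ))) :
    ∃ V : Fin (n+1) → Set M, (∀ j, IsOpen (V j)) ∧ (∀ x : M, ∃ j, x ∈ V j) ∧
      ∀ j, ∃ f : ↥(V j) → (Fin n → ℝ) × ℝ, Continuous f ∧ Function.Injective f ∧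
        ∀ u, ‖f u‖ ≤ 1 := by
  classical
  obtain ⟨UU, E, c, hUUo, hUUψ, hEo, hEdisj, hEcov, hEU⟩ := exists_colored_pieces hch
  set ψ : ∀ i, ↥(UU i) ≃ₜ (Fin n → ℝ) := fun i => Classical.choice (hUUψ i) with hψ_def
  set V : Fin (n+1) → Set M := fun j => ⋃ k, E j k with hV_def
  have hVo : ∀ j, IsOpen (V j) := fun j => isOpen_iUnion (hEo j)
  have hVcov : ∀ x : M, ∃ j, x ∈ V j := by
    intro x
    obtain ⟨j, k, h⟩ := hEcov x
    exact ⟨j, mem_iUnion.2 ⟨k, h⟩⟩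
  refine ⟨V, hVo, hVcov, ?_⟩
  intro j
  set h : ℕ → M → (Fin n → ℝ) × ℝ := fun k x =>
    if hx : x ∈ UU (c j k) then
      ((1 + ‖ψ (c j k) ⟨x, hx⟩‖)⁻¹ • ψ (c j k) ⟨x, hx⟩, ((k:ℝ)+1)⁻¹) else 0 with hh_def
  have hkex : ∀ u : ↥(V j), ∃ k, (u:M) ∈ E j k := fun u => mem_iUnion.1 u.2
  set pk : ↥(V j) → ℕ := fun u => (hkex u).choose with hpk_def
  have hpk : ∀ u, (u:M) ∈ E j (pk u) := fun u => (hkex u).choose_spec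
  set f : ↥(V j) → (Fin n → ℝ) × ℝ := fun u => h (pk u) u with hf_def
  have huniq : ∀ (u : ↥(V j)) k, (u:M) ∈ E j k → pk u = k := by
    intro u k hk
    by_contra hne
    exact absurd (show (u:M) ∈ E j (pk u) ∩ E j k from ⟨hpk u, hk⟩)
      (by rw [hEdisj j _ _ hne]; exact notMem_empty _)
  have hf_eq : ∀ (k) (u : ↥(V j)), (u:M) ∈ E j k → f u = h k u := by
    intro k u hk
    rw [hf_def]
    simp only
    rw [huniq u k hk]
  -- continuity of `h k` on the subtype of the chart
  have hHcont : ∀ k, Continuous (fun v : ↥(UU (c j k)) =>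
      ((1 + ‖ψ (c j k) v‖)⁻¹ • ψ (c j k) v, ((k:ℝ)+1)⁻¹) : ↥(UU (c j k)) → (Fin n → ℝ) × ℝ) := by
    intro k
    exact (squash_cont.comp (ψ (c j k)).continuous).prodMk continuous_const
  have hcont : Continuous f := by
    rw [continuous_iff_continuousAt]
    intro u
    set k := pk u with hk_def
    have hopen : IsOpen (Subtype.val ⁻¹' (E j k) : Set ↥(V j)) :=
      (hEo j k).preimage continuous_subtype_val
    have humem : u ∈ (Subtype.val ⁻¹' (E j k) : Set ↥(V j)) := hpk u
    have hgcont : ContinuousOn (fun w : ↥(V j) => h k (w:M)) (Subtype.val ⁻¹' (E j k)) := by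
      rw [continuousOn_iff_continuous_restrict]
      have heq : domRestrict (Subtype.val ⁻¹' (E j k)) (fun w : ↥(V j) => h k (w:M)) =
          (fun v : ↥(UU (c j k)) =>
            ((1 + ‖ψ (c j k) v‖)⁻¹ • ψ (c j k) v, ((k:ℝ)+1)⁻¹)) ∘
          (fun w : ↥(Subtype.val ⁻¹' (E j k) : Set ↥(V j)) =>
            (⟨((w:↥(V j)):M), hEU j k w.2⟩ : ↥(UU (c j k)))) := by
        funext w
        show h k ((w:↥(V j)):M) = _
        rw [hh_def]
        simp only
        rw [dif_pos (hEU j k w.2)]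
        rfl
      rw [heq]
      exact (hHcont k).comp
        ((continuous_subtype_val.comp continuous_subtype_val).subtype_mk _)
    have hgat : ContinuousAt (fun w : ↥(V j) => h k (w:M)) u :=
      hgcont.continuousAt (hopen.mem_nhds humem)
    apply hgat.congr
    apply Filter.eventuallyEq_of_mem (hopen.mem_nhds humem)
    intro w hw
    exact (hf_eq k w hw).symm
  have hinj : Function.Injective f := by
    intro u v huv
    have hu : (u:M) ∈ UU (c j (pk u)) := hEU j (pk u) (hpk u)
    have hv : (v:M) ∈ UU (c j (pk v)) := hEU j (pk v) (hpk v)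
    have hfu : f u = ((1 + ‖ψ (c j (pk u)) ⟨u, hu⟩‖)⁻¹ • ψ (c j (pk u)) ⟨u, hu⟩,
        ((pk u:ℝ)+1)⁻¹) := by
      rw [hf_def]; simp only; rw [hh_def]; simp only; rw [dif_pos hu]
    have hfv : f v = ((1 + ‖ψ (c j (pk v)) ⟨v, hv⟩‖)⁻¹ • ψ (c j (pk v)) ⟨v, hv⟩,
        ((pk v:ℝ)+1)⁻¹) := by
      rw [hf_def]; simp only; rw [hh_def]; simp only; rw [dif_pos hv]
    rw [hfu, hfv] at huv
    have h2 : ((pk u:ℝ)+1)⁻¹ = ((pk v:ℝ)+1)⁻¹ := congrArg Prod.snd huv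
    have hpkuv : pk u = pk v := by
      have h3 : ((pk u:ℝ)+1) = ((pk v:ℝ)+1) := inv_injective h2
      have h4 : (pk u : ℝ) = (pk v : ℝ) := by linarith
      exact_mod_cast h4
    -- re-express f v with the index pk u
    have hv2 : (v:M) ∈ E j (pk u) := by rw [hpkuv]; exact hpk v
    have hvU : (v:M) ∈ UU (c j (pk u)) := hEU j (pk u) hv2
    have hfv2 : f v = ((1 + ‖ψ (c j (pk u)) ⟨v, hvU⟩‖)⁻¹ • ψ (c j (pk u)) ⟨v, hvU⟩,
        ((pk u:ℝ)+1)⁻¹) := by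
      rw [hf_eq (pk u) v hv2, hh_def]
      simp only
      rw [dif_pos hvU]
    have huv2 : f u = f v := by rw [hfu, hfv]; exact huv
    rw [hfu, hfv2] at huv2
    have h1 : (1 + ‖ψ (c j (pk u)) ⟨u, hu⟩‖)⁻¹ • ψ (c j (pk u)) ⟨u, hu⟩ =
        (1 + ‖ψ (c j (pk u)) ⟨v, hvU⟩‖)⁻¹ • ψ (c j (pk u)) ⟨v, hvU⟩ := congrArg Prod.fst huv2
    have h5 : ψ (c j (pk u)) ⟨u, hu⟩ = ψ (c j (pk u)) ⟨v, hvU⟩ := squash_inj h1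
    have h6 : (⟨u, hu⟩ : ↥(UU (c j (pk u)))) = ⟨v, hvU⟩ := (ψ (c j (pk u))).injective h5
    have h7 : (u : M) = (v : M) := congrArg (Subtype.val : ↥(UU (c j (pk u))) → M) h6
    exact Subtype.ext h7
  refine ⟨f, hcont, hinj, ?_⟩
  intro u
  have hu : (u:M) ∈ UU (c j (pk u)) := hEU j (pk u) (hpk u)
  have hfu : f u = ((1 + ‖ψ (c j (pk u)) ⟨u, hu⟩‖)⁻¹ • ψ (c j (pk u)) ⟨u, hu⟩,
      ((pk u:ℝ)+1)⁻¹) := by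
    rw [hf_def]; simp only; rw [hh_def]; simp only; rw [dif_pos hu]
  rw [hfu, Prod.norm_def]
  apply max_le
  · exact squash_norm_le _
  · rw [Real.norm_eq_abs, abs_of_pos (by positivity)]
    rw [inv_le_one_iff₀]
    right
    have : (0:ℝ) ≤ (pk u : ℝ) := Nat.cast_nonneg _
    linarith

end GoodCover
section Proper

variable {M : Type*} [MetricSpace M] [Nonempty M]

/-- On a σ-compact, weakly locally compact metric space there is a continuous function with
"compact sublevel sets". -/
theorem exists_proper_function [SigmaCompactSpace M] [WeaklyLocallyCompactSpace M] :
    ∃ φ : M → ℝ, Continuous φ ∧ ∀ R : ℝ, ∃ K : Set M, IsCompact K ∧ {x | φ x ≤ R} ⊆ K := by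
  classical
  set K0 := CompactExhaustion.choice M with hK0_def
  obtain ⟨pt⟩ : Nonempty M := inferInstance
  set m0 : ℕ := K0.find pt with hm0_def
  set KK : ℕ → Set M := fun s => K0 (s + m0) with hKK_def
  have hKKc : ∀ s, IsCompact (KK s) := fun s => K0.isCompact _
  have hKKne : ∀ s, (KK s).Nonempty := fun s => ⟨pt, K0.subset (Nat.le_add_left m0 s) (K0.mem_find pt)⟩
  have hKKint : ∀ s, KK s ⊆ interior (KK (s+1)) := by
    intro s
    have h := K0.subset_interior_succ (s + m0)
    rwa [show s + m0 + 1 = (s+1) + m0 by omega] at h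
  have hKKmono : ∀ {s t : ℕ}, s ≤ t → KK s ⊆ KK t := fun {s t} h =>
    K0.subset (by omega)
  have hKKU : ∀ x : M, ∃ s, x ∈ KK s := by
    intro x
    exact ⟨K0.find x, K0.subset (Nat.le_add_right _ _) (K0.mem_find x)⟩
  -- thickening constants
  have hδ : ∀ s, ∃ δ : ℝ, 0 < δ ∧ Metric.thickening δ (KK s) ⊆ interior (KK (s+1)) := by
    intro s
    obtain ⟨δ, hδ1, hδ2⟩ := (hKKc s).exists_thickening_subset_open isOpen_interior (hKKint s)
    exact ⟨δ, hδ1, hδ2⟩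
  choose δ hδpos hδsub using hδ
  set t : ℕ → M → ℝ := fun s x => min 1 ((δ s)⁻¹ * infDist x (KK s)) with ht_def
  have ht01 : ∀ s x, 0 ≤ t s x ∧ t s x ≤ 1 := by
    intro s x
    constructor
    · apply le_min
      · norm_num
      · have h1 : 0 ≤ (δ s)⁻¹ := le_of_lt (inv_pos.2 (hδpos s))
        exact mul_nonneg h1 infDist_nonneg
    · exact min_le_left _ _
  have htcont : ∀ s, Continuous (t s) :=
    fun s => continuous_const.min (continuous_const.mul (continuous_infDist_pt (KK s)))
  have htzero : ∀ s x, x ∈ KK s → t s x = 0 := by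
    intro s x hx
    rw [ht_def]
    simp only
    rw [infDist_zero_of_mem hx, mul_zero, min_eq_right (by norm_num)]
  have htone : ∀ s x, x ∉ KK (s+1) → t s x = 1 := by
    intro s x hx
    have h1 : x ∉ Metric.thickening (δ s) (KK s) :=
      fun hc => hx (interior_subset (hδsub s hc))
    have h2 : δ s ≤ infDist x (KK s) := by
      by_contra hlt
      push_neg at hlt
      obtain ⟨y, hy1, hy2⟩ := (infDist_lt_iff (hKKne s)).1 hlt
      exact h1 (Metric.mem_thickening_iff.2 ⟨y, hy1, hy2⟩)
    have h3 : (1:ℝ) ≤ (δ s)⁻¹ * infDist x (KK s) := by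
      have h4 := mul_le_mul_of_nonneg_left h2 (le_of_lt (inv_pos.2 (hδpos s)))
      rwa [inv_mul_cancel₀ (ne_of_gt (hδpos s))] at h4
    rw [ht_def]
    simp only
    rw [min_eq_left h3]
  have htsupp : ∀ (N : ℕ) (x : M), x ∈ KK N → ∀ s, N ≤ s → t s x = 0 :=
    fun N x hx s hs => htzero s x (hKKmono hs hx)
  have hsum : ∀ x, Summable (fun s => t s x) := by
    intro x
    obtain ⟨N, hN⟩ := hKKU x
    apply summable_of_ne_finset_zero (s := Finset.range N)
    intro s hs
    exact htsupp N x hN s (le_of_not_gt (fun h => hs (Finset.mem_range.2 h)))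
  set φ : M → ℝ := fun x => ∑' s, t s x with hφ_def
  have hφeq : ∀ (N : ℕ) (x : M), x ∈ KK N → φ x = ∑ s ∈ Finset.range N, t s x := by
    intro N x hx
    apply tsum_eq_sum
    intro s hs
    exact htsupp N x hx s (le_of_not_gt (fun h => hs (Finset.mem_range.2 h)))
  have hφcont : Continuous φ := by
    rw [continuous_iff_continuousAt]
    intro x
    obtain ⟨N, hN⟩ := hKKU x
    have hxint : x ∈ interior (KK (N+1)) := hKKint N hN
    have hag : ∀ y ∈ interior (KK (N+1)), φ y = ∑ s ∈ Finset.range (N+1), t s y :=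
      fun y hy => hφeq (N+1) y (interior_subset hy)
    have hgc : ContinuousAt (fun y => ∑ s ∈ Finset.range (N+1), t s y) x := by
      apply Continuous.continuousAt
      exact continuous_finset_sum _ (fun s _ => htcont s)
    apply hgc.congr
    apply Filter.eventuallyEq_of_mem (isOpen_interior.mem_nhds hxint)
    intro y hy
    exact (hag y hy).symm
  refine ⟨φ, hφcont, ?_⟩
  intro R
  set N : ℕ := ⌈R⌉₊ + 1 with hN_def
  refine ⟨KK (N+1), hKKc _, ?_⟩
  intro x hx
  by_contra hxK
  have hones : ∀ s, s ≤ N → t s x = 1 := by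
    intro s hs
    apply htone
    intro hc
    exact hxK (hKKmono (by omega) hc)
  have hlow : (N:ℝ) ≤ φ x := by
    have h1 : ∑ s ∈ Finset.range N, t s x ≤ φ x := by
      apply Summable.sum_le_tsum
      · intro s _
        exact (ht01 s x).1
      · exact hsum x
    have h2 : ∑ s ∈ Finset.range N, t s x = N := by
      rw [Finset.sum_congr rfl (fun s hs => hones s (le_of_lt (Finset.mem_range.1 hs)))]
      simp
    linarith
  have hR : φ x ≤ R := hx
  have hRN : (R:ℝ) < N := by
    rw [hN_def]
    push_cast
    calc R ≤ ⌈R⌉₊ := Nat.le_ceil R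
    _ < ⌈R⌉₊ + 1 := by linarith
  linarith

end Proper
section Assembly

variable {M : Type*} [MetricSpace M] [SecondCountableTopology M] [Nonempty M]
  [SigmaCompactSpace M] [WeaklyLocallyCompactSpace M] {n : ℕ}

theorem exists_embedding_euclidean_aux
    (hch : ∀ x : M, ∃ U : Set M, IsOpen U ∧ x ∈ U ∧ Nonempty (U ≃ₜ (Fin n → ℝ))) :
    ∃ (N : ℕ) (F : M → (Fin N → ℝ)), Topology.IsEmbedding F := by
  classical
  obtain ⟨V, hVo, hVcov, hVf⟩ := exists_good_cover hch
  choose f hfc hfi hfb using hVf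
  obtain ⟨φ, hφc, hφK⟩ := exists_proper_function (M := M)
  set ρ : Fin (n+1) → M → ℝ := fun j x => ((infEdist x (V j)ᶜ) ⊓ 1).toReal with hρ_def
  have hρcont : ∀ j, Continuous (ρ j) := by
    intro j
    have h1 : Continuous fun x : M => (infEdist x (V j)ᶜ ⊓ 1) :=
      continuous_infEdist.min continuous_const
    apply ENNReal.continuousOn_toReal.comp_continuous h1
    intro x
    exact ne_top_of_le_ne_top ENNReal.one_ne_top (min_le_right _ _)
  have hρ0 : ∀ j x, 0 ≤ ρ j x := fun j x => ENNReal.toReal_nonneg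
  have hρ1 : ∀ j x, ρ j x ≤ 1 := by
    intro j x
    have h := ENNReal.toReal_mono ENNReal.one_ne_top (min_le_right (infEdist x (V j)ᶜ) 1)
    simpa using h
  have hρpos : ∀ j x, x ∈ V j → 0 < ρ j x := by
    intro j x hx
    apply ENNReal.toReal_pos
    · rw [← pos_iff_ne_zero]
      apply lt_min
      · refine infEdist_pos_iff_notMem_closure.2 ?_
        rw [(hVo j).isClosed_compl.closure_eq]
        exact fun h => h hx
      · norm_num
    · exact ne_top_of_le_ne_top ENNReal.one_ne_top (min_le_right _ _)
  have hρzero : ∀ j x, x ∉ V j → ρ j x = 0 := by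
    intro j x hx
    have hmem : x ∈ (V j)ᶜ := hx
    have h0 : infEdist x (V j)ᶜ = 0 := infEdist_zero_of_mem hmem
    rw [hρ_def]
    simp only
    rw [h0]
    simp
  set g : Fin (n+1) → M → (Fin n → ℝ) × ℝ := fun j x =>
    if hx : x ∈ V j then ρ j x • f j ⟨x, hx⟩ else 0 with hg_def
  have hgbound : ∀ j x, ‖g j x‖ ≤ ρ j x := by
    intro j x
    rw [hg_def]
    simp only
    split_ifs with hx
    · rw [norm_smul, Real.norm_eq_abs, abs_of_nonneg (hρ0 j x)]
      calc ρ j x * ‖f j ⟨x, hx⟩‖ ≤ ρ j x * 1 :=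
        mul_le_mul_of_nonneg_left (hfb j _) (hρ0 j x)
      _ = ρ j x := mul_one _
    · rw [norm_zero]; exact hρ0 j x
  have hgcont : ∀ j, Continuous (g j) := by
    intro j
    rw [continuous_iff_continuousAt]
    intro x
    by_cases hx : x ∈ V j
    · have hcOn : ContinuousOn (g j) (V j) := by
        rw [continuousOn_iff_continuous_restrict]
        have heq : domRestrict (V j) (g j) = fun u : ↥(V j) => ρ j ↑u • f j u := by
          funext u
          show g j ↑u = _
          rw [hg_def]
          simp only
          rw [dif_pos u.2]
        rw [heq]
        exact ((hρcont j).comp continuous_subtype_val).smul (hfc j)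
      exact hcOn.continuousAt ((hVo j).mem_nhds hx)
    · have hgx : g j x = 0 := by rw [hg_def]; simp only; rw [dif_neg hx]
      have htend : Tendsto (g j) (𝓝 x) (𝓝 0) := by
        apply squeeze_zero_norm (hgbound j)
        have := (hρcont j).tendsto x
        rwa [hρzero j x hx] at this
      rw [ContinuousAt, hgx]
      exact htend
  -- the big map
  set ιt : Type := ((Fin (n+1)) × ((Fin n) ⊕ Unit)) ⊕ ((Fin (n+1)) ⊕ Unit) with hιt_def
  set F : M → (ιt → ℝ) := fun x i =>
    match i with
    | Sum.inl (j, Sum.inl tc) => (g j x).1 tc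
    | Sum.inl (j, Sum.inr _) => (g j x).2
    | Sum.inr (Sum.inl j) => ρ j x
    | Sum.inr (Sum.inr _) => φ x
    with hF_def
  have hFcont : Continuous F := by
    apply continuous_pi
    intro i
    rcases i with ⟨j, tc | u⟩ | j | u
    · exact (continuous_apply tc).comp (continuous_fst.comp (hgcont j))
    · exact continuous_snd.comp (hgcont j)
    · exact hρcont j
    · exact hφc
  have hFinj : Function.Injective F := by
    intro x y hxy
    obtain ⟨j, hxj⟩ := hVcov x
    have hρx : 0 < ρ j x := hρpos j x hxj
    have hρeq : ρ j x = ρ j y := congrFun hxy (Sum.inr (Sum.inl j))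
    have hyj : y ∈ V j := by
      by_contra hy
      rw [hρzero j y hy] at hρeq
      linarith [hρeq ▸ hρx]
    have hgeq : g j x = g j y := by
      apply Prod.ext
      · funext tc
        exact congrFun hxy (Sum.inl (j, Sum.inl tc))
      · exact congrFun hxy (Sum.inl (j, Sum.inr ()))
    have hgx : g j x = ρ j x • f j ⟨x, hxj⟩ := by
      rw [hg_def]; simp only; rw [dif_pos hxj]
    have hgy : g j y = ρ j y • f j ⟨y, hyj⟩ := by
      rw [hg_def]; simp only; rw [dif_pos hyj]
    rw [hgx, hgy, ← hρeq] at hgeq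
    have hfeq : f j ⟨x, hxj⟩ = f j ⟨y, hyj⟩ :=
      smul_right_injective _ (ne_of_gt hρx) hgeq
    have := hfi j hfeq
    exact congrArg Subtype.val this
  have hFclosed : IsClosedMap F := by
    intro C hC
    rw [← closure_subset_iff_isClosed]
    intro y hy
    rw [mem_closure_iff_seq_limit] at hy
    obtain ⟨a, haC, hatend⟩ := hy
    choose x hxC hxa using haC
    have hφtend : Tendsto (fun k => φ (x k)) atTop (𝓝 (y (Sum.inr (Sum.inr ())))) := by
      have h1 : Tendsto (fun k => F (x k)) atTop (𝓝 y) := by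
        have : (fun k => F (x k)) = a := by
          funext k; rw [hxa k]
        rwa [this]
      have h2 := tendsto_pi_nhds.1 h1 (Sum.inr (Sum.inr ()))
      exact h2
    have hbdd : BddAbove (Set.range fun k => φ (x k)) := hφtend.bddAbove_range
    obtain ⟨R, hR⟩ := hbdd
    obtain ⟨Kc, hKc, hKsub⟩ := hφK R
    have hxK : ∀ k, x k ∈ Kc := by
      intro k
      apply hKsub
      exact hR (mem_range_self k)
    obtain ⟨z, hzK, s, hs, hzt⟩ := hKc.tendsto_subseq hxK
    have hzC : z ∈ C := by
      apply hC.mem_of_tendsto hzt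
      exact Filter.Eventually.of_forall (fun k => hxC (s k))
    have h3 : Tendsto (fun k => F (x (s k))) atTop (𝓝 (F z)) :=
      (hFcont.tendsto z).comp hzt
    have h4 : Tendsto (fun k => F (x (s k))) atTop (𝓝 y) := by
      have h5 : Tendsto (fun k => a (s k)) atTop (𝓝 y) :=
        hatend.comp hs.tendsto_atTop
      have : (fun k => F (x (s k))) = fun k => a (s k) := by
        funext k; rw [hxa (s k)]
      rwa [this]
    have hFz : F z = y := tendsto_nhds_unique h3 h4
    exact ⟨z, hzC, hFz⟩
  have hFemb : Topology.IsEmbedding F :=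
    (Topology.IsClosedEmbedding.of_continuous_injective_isClosedMap
      hFcont hFinj hFclosed).toIsEmbedding
  -- transport to a genuine euclidean space
  have : Fintype ιt := by rw [hιt_def]; infer_instance
  set N := Fintype.card ιt with hN_def
  set e : ιt ≃ Fin N := Fintype.equivFin ιt with he_def
  set ho : (ιt → ℝ) ≃ₜ (Fin N → ℝ) := Homeomorph.piCongrLeft (Y := fun _ => ℝ) e with hho_def
  exact ⟨N, ho ∘ F, ho.isEmbedding.comp hFemb⟩

end Assembly
theorem manifold_metrizable_iff_embeds_euclidean (M : Type*) [TopologicalSpace M] (n : ℕ)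
    (hM : IsTopManifold M n) :
    TopologicalSpace.MetrizableSpace M ↔
      ∃ (N : ℕ) (f : M → (Fin N → ℝ)), Topology.IsEmbedding f := by
  obtain ⟨hconn, hT2, hch⟩ := hM
  haveI := hconn
  haveI := hT2
  constructor
  · intro hmet
    haveI := hmet
    letI : MetricSpace M := TopologicalSpace.metrizableSpaceMetric M
    haveI : Nonempty M := hconn.toNonempty
    haveI : WeaklyLocallyCompactSpace M := weaklyLocallyCompact_of_charts hch
    haveI : SigmaCompactSpace M := sigmaCompact_of_connected
    haveI : SecondCountableTopology M := secondCountable_of_sigmaCompact_metric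
    exact exists_embedding_euclidean_aux hch
  · rintro ⟨N, f, hf⟩
    exact hf.metrizableSpace
end
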